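/- The group of linear isometries of the weighted poset block space decomposes as a semidirect product: GL_{w,(P,π)}(V) ≅ 𝒯 ⋊ 𝒜, where 𝒯 = ker Λ is the normal subgroup of isometries fixing each principal-ideal filtration (with block-diagonal parts preserving the weights W_i), and 𝒜 = Ψ(Aut(P,π)) ≅ Aut(P,π). -/

import Mathlib

attribute [local instance] Classical.propDecidable

noncomputable section

variable {ι F : Type*}

section Defs
variable [Fintype ι] [PartialOrder ι] [Field F] [Fintype F] {k : ι → ℕ}

/-- block support -/
def suppB (u : ∀ i, Fin (k i) → F) : Finset ι :=
  Finset.univ.filter fun i => u i ≠ 0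

/-- order ideal generated by the block support -/
def idealOf (u : ∀ i, Fin (k i) → F) : Finset ι :=
  Finset.univ.filter fun i => ∃ j ∈ suppB u, i ≤ j

/-- maximal elements of the ideal generated by the support -/
def maxOf (u : ∀ i, Fin (k i) → F) : Finset ι :=
  (idealOf u).filter fun i => ∀ j ∈ idealOf u, i ≤ j → i = j

/-- maximal weight of a block -/
def Wblk (w : F → ℕ) (u : ∀ i, Fin (k i) → F) (i : ι) : ℕ :=
  Finset.univ.sup fun j => w (u i j)

/-- maximal value of the weight -/
def Mw (w : F → ℕ) : ℕ := Finset.univ.sup w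

/-- minimal value of the weight on nonzero elements -/
def mw (w : F → ℕ) : ℕ := sInf (w '' {a | a ≠ 0})

/-- the weighted poset block weight -/
def omegaW (w : F → ℕ) (u : ∀ i, Fin (k i) → F) : ℕ :=
  (∑ i ∈ maxOf u, Wblk w u i) + (idealOf u \ maxOf u).card * Mw w

/-- principal ideal generated by `i` -/
def pIdeal (i : ι) : Finset ι := Finset.univ.filter fun j => j ≤ i

end Defs


/-- Membership in the subgroup `𝒯`: `T` maps each `v_i ∈ V_i` to `u_i + γ_i` with
`u_i ∈ V_i`, `γ_i ∈ V_{⟨i⟩*}` and `W_i(v_i) = W_i(u_i)`. -/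
def InT [Fintype ι] [PartialOrder ι] [Field F] [Fintype F] {k : ι → ℕ}
    (w : F → ℕ) (T : (∀ i, Fin (k i) → F) →ₗ[F] (∀ i, Fin (k i) → F)) : Prop :=
  ∀ (i : ι) (v : ∀ i, Fin (k i) → F), suppB v ⊆ {i} →
    ∃ u γ : ∀ i, Fin (k i) → F, T v = u + γ ∧ suppB u ⊆ {i} ∧
      (∀ l ∈ suppB γ, l < i) ∧ Wblk w v i = Wblk w u i

/-- The group of linear isometries, as a subgroup of the linear automorphism
group of `V`. -/
def glIso [Fintype ι] [PartialOrder ι] [Field F] [Fintype F] {k : ι → ℕ}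
    (w : F → ℕ) : Subgroup ((∀ i, Fin (k i) → F) ≃ₗ[F] (∀ i, Fin (k i) → F)) where
  carrier := {T | ∀ u, omegaW w (T u) = omegaW w u}
  one_mem' := fun _ => rfl
  mul_mem' := by
    intro a b ha hb u
    have : (a * b) u = a (b u) := rfl
    rw [this, ha, hb]
  inv_mem' := by
    intro a ha u
    have h := ha (a⁻¹ u)
    have h2 : a (a⁻¹ u) = u := a.apply_symm_apply u
    rw [h2] at h
    exact h.symm

section Dev
set_option linter.unusedSectionVars false
set_option linter.unusedVariables false
variable [Fintype ι] [PartialOrder ι] [Field F] [Fintype F] {k : ι → ℕ}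

lemma mem_suppB {u : ∀ i, Fin (k i) → F} {i : ι} : i ∈ suppB u ↔ u i ≠ 0 := by
  simp [suppB]

lemma mem_idealOf {u : ∀ i, Fin (k i) → F} {i : ι} :
    i ∈ idealOf u ↔ ∃ j ∈ suppB u, i ≤ j := by simp [idealOf]

lemma mem_pIdeal {i j : ι} : j ∈ pIdeal i ↔ j ≤ i := by simp [pIdeal]

lemma mem_maxOf {u : ∀ i, Fin (k i) → F} {m : ι} :
    m ∈ maxOf u ↔ m ∈ idealOf u ∧ ∀ j ∈ idealOf u, m ≤ j → m = j := by
  simp [maxOf]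

lemma suppB_subset_idealOf (u : ∀ i, Fin (k i) → F) : suppB u ⊆ idealOf u := by
  intro i hi; exact mem_idealOf.2 ⟨i, hi, le_rfl⟩

lemma maxOf_subset_suppB (u : ∀ i, Fin (k i) → F) : maxOf u ⊆ suppB u := by
  intro m hm
  obtain ⟨hm1, hm2⟩ := mem_maxOf.1 hm
  obtain ⟨j, hj, hle⟩ := mem_idealOf.1 hm1
  exact (hm2 j (suppB_subset_idealOf u hj) hle) ▸ hj

lemma idealOf_lower {u : ∀ i, Fin (k i) → F} {i j : ι} (hj : j ∈ idealOf u)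
    (hij : i ≤ j) : i ∈ idealOf u := by
  obtain ⟨m, hm, hle⟩ := mem_idealOf.1 hj
  exact mem_idealOf.2 ⟨m, hm, hij.trans hle⟩

lemma exists_maxOf_ge {u : ∀ i, Fin (k i) → F} {l : ι} (hl : l ∈ idealOf u) :
    ∃ m ∈ maxOf u, l ≤ m := by
  classical
  have hne : ((idealOf u).filter fun x => l ≤ x).Nonempty := ⟨l, by simp [hl]⟩
  obtain ⟨m, hm, hmax⟩ : ∃ m ∈ (idealOf u).filter fun x => l ≤ x,
      ∀ x ∈ (idealOf u).filter fun x => l ≤ x, ¬ m < x := by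
    obtain ⟨m, hm⟩ := Finset.exists_maximal hne
    exact ⟨m, hm.1, fun x hx hlt => lt_irrefl _ (hlt.trans_le (hm.2 hx hlt.le))⟩
  simp only [Finset.mem_filter] at hm
  refine ⟨m, mem_maxOf.2 ⟨hm.1, ?_⟩, hm.2⟩
  intro j hj hmj
  by_contra hne'
  exact hmax j (Finset.mem_filter.2 ⟨hj, hm.2.trans hmj⟩) (lt_of_le_of_ne hmj hne')

lemma suppB_add_subset (u v : ∀ i, Fin (k i) → F) :
    suppB (u + v) ⊆ suppB u ∪ suppB v := by
  intro i hi
  rw [mem_suppB] at hi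
  by_contra h
  simp only [Finset.mem_union, mem_suppB, not_or, not_not] at h
  exact hi (by simp [Pi.add_apply, h.1, h.2])

lemma suppB_neg (u : ∀ i, Fin (k i) → F) : suppB (-u) = suppB u := by
  ext i; simp [mem_suppB]

end Dev
section Dev2
set_option linter.unusedSectionVars false
variable [Fintype ι] [PartialOrder ι] [Field F] [Fintype F] {k : ι → ℕ}
variable {w : F → ℕ}

lemma w_zero (hw0 : ∀ a : F, w a = 0 ↔ a = 0) : w 0 = 0 := (hw0 0).2 rfl

lemma one_le_mw (hw0 : ∀ a : F, w a = 0 ↔ a = 0) : 1 ≤ mw w := by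
  have hne : (w '' {a | a ≠ 0}).Nonempty := ⟨w 1, 1, one_ne_zero, rfl⟩
  have := Nat.sInf_mem hne
  obtain ⟨a, ha, hwa⟩ := this
  have : w a ≠ 0 := fun h => ha ((hw0 a).1 h)
  unfold mw
  omega

lemma exists_mw : ∃ b : F, b ≠ 0 ∧ w b = mw w := by
  have hne : (w '' {a | a ≠ 0}).Nonempty := ⟨w 1, 1, one_ne_zero, rfl⟩
  obtain ⟨a, ha, hwa⟩ := Nat.sInf_mem hne
  exact ⟨a, ha, hwa⟩

lemma mw_le {a : F} (ha : a ≠ 0) : mw w ≤ w a := Nat.sInf_le ⟨a, ha, rfl⟩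

lemma w_le_Mw (a : F) : w a ≤ Mw w := Finset.le_sup (Finset.mem_univ a)

lemma one_le_Mw (hw0 : ∀ a : F, w a = 0 ↔ a = 0) : 1 ≤ Mw w := by
  have h := w_le_Mw (w := w) (1 : F)
  have : w (1 : F) ≠ 0 := fun h' => one_ne_zero ((hw0 1).1 h')
  omega

lemma mw_le_Mw (hw0 : ∀ a : F, w a = 0 ↔ a = 0) : mw w ≤ Mw w := by
  obtain ⟨b, hb, hwb⟩ := exists_mw (w := w)
  exact hwb ▸ w_le_Mw b

lemma Wblk_le_Mw (u : ∀ i, Fin (k i) → F) (i : ι) : Wblk w u i ≤ Mw w :=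
  Finset.sup_le fun j _ => w_le_Mw _

lemma le_Wblk (u : ∀ i, Fin (k i) → F) (i : ι) (t : Fin (k i)) :
    w (u i t) ≤ Wblk w u i := Finset.le_sup (f := fun j => w (u i j)) (Finset.mem_univ t)

lemma Wblk_eq_zero_iff (hw0 : ∀ a : F, w a = 0 ↔ a = 0) {u : ∀ i, Fin (k i) → F}
    {i : ι} : Wblk w u i = 0 ↔ u i = 0 := by
  constructor
  · intro h
    funext t
    have := le_Wblk (w := w) u i t
    rw [h, Nat.le_zero] at this
    exact (hw0 _).1 this
  · intro h
    have : ∀ t ∈ Finset.univ, w (u i t) = 0 := fun t _ => by rw [h]; simp [w_zero hw0]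
    refine Nat.le_zero.1 (Finset.sup_le fun t ht => Nat.le_zero.2 (this t ht))

lemma mw_le_Wblk (hw0 : ∀ a : F, w a = 0 ↔ a = 0) {u : ∀ i, Fin (k i) → F} {i : ι}
    (h : u i ≠ 0) : mw w ≤ Wblk w u i := by
  have : ∃ t, u i t ≠ 0 := by
    by_contra hc
    push_neg at hc
    exact h (funext hc)
  obtain ⟨t, ht⟩ := this
  exact (mw_le ht).trans (le_Wblk u i t)

lemma Wblk_add_le (hwadd : ∀ a b : F, w (a + b) ≤ w a + w b)
    (u v : ∀ i, Fin (k i) → F) (i : ι) :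
    Wblk w (u + v) i ≤ Wblk w u i + Wblk w v i := by
  refine Finset.sup_le fun t _ => ?_
  exact (hwadd _ _).trans (Nat.add_le_add (le_Wblk u i t) (le_Wblk v i t))

lemma Wblk_neg (hwneg : ∀ a : F, w (-a) = w a) (u : ∀ i, Fin (k i) → F) (i : ι) :
    Wblk w (-u) i = Wblk w u i := by
  unfold Wblk
  congr 1
  funext t
  exact hwneg _

end Dev2
section Dev3
set_option linter.unusedSectionVars false
set_option linter.unusedVariables false
variable [Fintype ι] [PartialOrder ι] [Field F] [Fintype F] {k : ι → ℕ}
variable {w : F → ℕ}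

/-- the vector supported on a single block -/
def sing (i : ι) (x : Fin (k i) → F) : ∀ i, Fin (k i) → F := Function.update 0 i x

lemma sing_apply_same (i : ι) (x : Fin (k i) → F) : sing i x i = x := by
  unfold sing
  rw [Function.update_self]

lemma sing_apply_ne {i l : ι} (h : l ≠ i) (x : Fin (k i) → F) : sing i x l = 0 := by
  unfold sing
  rw [Function.update_of_ne h]
  rfl

lemma suppB_sing (i : ι) (x : Fin (k i) → F) : suppB (sing i x) ⊆ {i} := by
  intro l hl
  rw [mem_suppB] at hl
  by_contra h
  simp only [Finset.mem_singleton] at h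
  exact hl (sing_apply_ne h x)

lemma sing_add (i : ι) (x y : Fin (k i) → F) :
    sing i (x + y) = sing i x + sing i y := by
  funext l
  by_cases h : l = i
  · subst h; simp [sing_apply_same]
  · simp [sing_apply_ne h]

lemma sing_smul (i : ι) (a : F) (x : Fin (k i) → F) :
    sing i (a • x) = a • sing i x := by
  funext l
  by_cases h : l = i
  · subst h; simp [sing_apply_same]
  · simp [sing_apply_ne h]

lemma sing_zero (i : ι) : sing i (0 : Fin (k i) → F) = 0 := by
  funext l
  by_cases h : l = i
  · subst h; simp [sing_apply_same]
  · simp [sing_apply_ne h]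

lemma eq_sing_of_suppB_subset {v : ∀ i, Fin (k i) → F} {i : ι}
    (h : suppB v ⊆ {i}) : v = sing i (v i) := by
  funext l
  by_cases hl : l = i
  · subst hl; rw [sing_apply_same]
  · rw [sing_apply_ne hl]
    by_contra hc
    have : l ∈ suppB v := mem_suppB.2 fun h0 => hc (h0 ▸ rfl)
    exact hl (Finset.mem_singleton.1 (h this))

lemma eq_sum_sing (v : ∀ i, Fin (k i) → F) :
    v = ∑ i ∈ Finset.univ, sing i (v i) := by
  funext l
  rw [Finset.sum_apply]
  rw [Finset.sum_eq_single l (fun i _ hne => sing_apply_ne (Ne.symm hne) (v i))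
    (fun h => absurd (Finset.mem_univ l) h)]
  rw [sing_apply_same]

lemma suppB_sum_subset {s : Finset α} {f : α → ∀ i, Fin (k i) → F} {j : ι}
    (hj : j ∈ suppB (∑ x ∈ s, f x)) : ∃ x ∈ s, j ∈ suppB (f x) := by
  by_contra h
  push_neg at h
  rw [mem_suppB] at hj
  apply hj
  rw [Finset.sum_apply]
  refine Finset.sum_eq_zero fun x hx => ?_
  have := h x hx
  rw [mem_suppB, not_not] at this
  exact this

lemma idealOf_eq_pIdeal {v : ∀ i, Fin (k i) → F} {i : ι}
    (h : suppB v ⊆ pIdeal i) (hi : i ∈ suppB v) : idealOf v = pIdeal i := by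
  ext l
  rw [mem_idealOf, mem_pIdeal]
  constructor
  · rintro ⟨j, hj, hle⟩
    exact hle.trans (mem_pIdeal.1 (h hj))
  · intro hle
    exact ⟨i, hi, hle⟩

lemma maxOf_eq_singleton {v : ∀ i, Fin (k i) → F} {i : ι}
    (h : suppB v ⊆ pIdeal i) (hi : i ∈ suppB v) : maxOf v = {i} := by
  have hid := idealOf_eq_pIdeal h hi
  ext m
  rw [mem_maxOf, hid, Finset.mem_singleton]
  constructor
  · rintro ⟨hm, hmax⟩
    exact hmax i (mem_pIdeal.2 le_rfl) (mem_pIdeal.1 hm)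
  · rintro rfl
    exact ⟨mem_pIdeal.2 le_rfl, fun j hj hle => le_antisymm hle (mem_pIdeal.1 hj)⟩

lemma omega_single {v : ∀ i, Fin (k i) → F} {i : ι}
    (h : suppB v ⊆ pIdeal i) (hi : i ∈ suppB v) :
    omegaW w v = Wblk w v i + (pIdeal i \ {i}).card * Mw w := by
  unfold omegaW
  rw [idealOf_eq_pIdeal h hi, maxOf_eq_singleton h hi, Finset.sum_singleton]

lemma boundA (hw0 : ∀ a : F, w a = 0 ↔ a = 0) {u : ∀ i, Fin (k i) → F} {i : ι}
    (hi : i ∈ idealOf u) :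
    mw w + (pIdeal i \ {i}).card * Mw w ≤ omegaW w u := by
  obtain ⟨m₀, hm₀, him⟩ := exists_maxOf_ge hi
  have h1 : mw w ≤ ∑ j ∈ maxOf u, Wblk w u j := by
    refine le_trans ?_ (Finset.single_le_sum (f := fun j => Wblk w u j)
      (fun j _ => Nat.zero_le _) hm₀)
    exact mw_le_Wblk hw0 (mem_suppB.1 (maxOf_subset_suppB u hm₀))
  have h2 : (pIdeal i \ {i}).card ≤ (idealOf u \ maxOf u).card := by
    refine Finset.card_le_card fun l hl => ?_
    rw [Finset.mem_sdiff, Finset.mem_singleton] at hl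
    obtain ⟨hli, hlne⟩ := hl
    rw [mem_pIdeal] at hli
    rw [Finset.mem_sdiff]
    refine ⟨idealOf_lower hi hli, fun hmax => ?_⟩
    exact hlne ((mem_maxOf.1 hmax).2 i hi hli)
  calc mw w + (pIdeal i \ {i}).card * Mw w
      ≤ (∑ j ∈ maxOf u, Wblk w u j) + (idealOf u \ maxOf u).card * Mw w :=
        Nat.add_le_add h1 (Nat.mul_le_mul_right _ h2)
    _ = omegaW w u := rfl

lemma boundB (hw0 : ∀ a : F, w a = 0 ↔ a = 0) {u : ∀ i, Fin (k i) → F}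
    {D : Finset ι} (hD : D ⊆ maxOf u) {j₀ : ι} (hj0 : j₀ ∈ D) :
    (∑ j ∈ D, Wblk w u j) + (maxOf u \ D).card * mw w
      + (pIdeal j₀ \ {j₀}).card * Mw w ≤ omegaW w u := by
  have hsum : (∑ j ∈ D, Wblk w u j) + (maxOf u \ D).card * mw w
      ≤ ∑ j ∈ maxOf u, Wblk w u j := by
    rw [← Finset.sum_sdiff hD]
    rw [Nat.add_comm]
    refine Nat.add_le_add_right ?_ _
    rw [← smul_eq_mul]
    exact Finset.card_nsmul_le_sum _ _ _ fun x hx =>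
      mw_le_Wblk hw0 (mem_suppB.1 (maxOf_subset_suppB u ((Finset.mem_sdiff.1 hx).1)))
  have hj0max : j₀ ∈ maxOf u := hD hj0
  have h2 : (pIdeal j₀ \ {j₀}).card ≤ (idealOf u \ maxOf u).card := by
    refine Finset.card_le_card fun l hl => ?_
    rw [Finset.mem_sdiff, Finset.mem_singleton] at hl
    obtain ⟨hli, hlne⟩ := hl
    rw [mem_pIdeal] at hli
    rw [Finset.mem_sdiff]
    have hj0id : j₀ ∈ idealOf u := (mem_maxOf.1 hj0max).1
    refine ⟨idealOf_lower hj0id hli, fun hmax => ?_⟩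
    exact hlne ((mem_maxOf.1 hmax).2 j₀ hj0id hli)
  calc (∑ j ∈ D, Wblk w u j) + (maxOf u \ D).card * mw w
        + (pIdeal j₀ \ {j₀}).card * Mw w
      ≤ (∑ j ∈ maxOf u, Wblk w u j) + (idealOf u \ maxOf u).card * Mw w :=
        Nat.add_le_add hsum (Nat.mul_le_mul_right _ h2)
    _ = omegaW w u := rfl

end Dev3
section Dev4
set_option linter.unusedSectionVars false
set_option linter.unusedVariables false
variable [Fintype ι] [PartialOrder ι] [Field F] [Fintype F] {k : ι → ℕ}
variable {w : F → ℕ}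

/-- level of an element: size of its principal ideal -/
def lev [Fintype ι] [PartialOrder ι] (i : ι) : ℕ := (pIdeal i).card

/-- size of the strict principal ideal -/
def cp [Fintype ι] [PartialOrder ι] (i : ι) : ℕ := (pIdeal i \ {i}).card

lemma cp_add_one (i : ι) : cp i + 1 = lev i := by
  unfold cp lev
  have hi : {i} ⊆ pIdeal i := by
    intro l hl; rw [Finset.mem_singleton] at hl; subst hl; exact mem_pIdeal.2 le_rfl
  rw [Finset.card_sdiff_of_subset hi, Finset.card_singleton]
  have : 1 ≤ (pIdeal i).card := Finset.card_pos.2 ⟨i, mem_pIdeal.2 le_rfl⟩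
  omega

lemma lev_mono {i j : ι} (h : i ≤ j) : lev i ≤ lev j := by
  refine Finset.card_le_card fun l hl => mem_pIdeal.2 ((mem_pIdeal.1 hl).trans h)

lemma lev_strict_mono {i j : ι} (h : i < j) : lev i < lev j := by
  refine Finset.card_lt_card ⟨fun l hl => mem_pIdeal.2 ((mem_pIdeal.1 hl).trans h.le), ?_⟩
  intro hc
  have := mem_pIdeal.1 (hc (mem_pIdeal.2 (le_refl j)))
  exact absurd (lt_of_le_of_lt this h) (lt_irrefl j)

lemma cp_le_of_lev_le {i j : ι} (h : lev i ≤ lev j) : cp i ≤ cp j := by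
  have h1 := cp_add_one i
  have h2 := cp_add_one j
  omega

lemma cp_eq_of_lev_eq {i j : ι} (h : lev i = lev j) : cp i = cp j := by
  have h1 := cp_add_one i
  have h2 := cp_add_one j
  omega

/-- single-coordinate vector -/
def atom (i : ι) (t : Fin (k i)) (a : F) : ∀ i, Fin (k i) → F :=
  sing i (fun s => if s = t then a else 0)

lemma Wblk_congr {x y : ∀ i, Fin (k i) → F} {j : ι} (h : x j = y j) :
    Wblk w x j = Wblk w y j := by unfold Wblk; rw [h]

lemma Wblk_apply_zero (hw0 : ∀ a : F, w a = 0 ↔ a = 0) {x : ∀ i, Fin (k i) → F}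
    {j : ι} (h : x j = 0) : Wblk w x j = 0 := by
  refine Nat.le_zero.1 (Finset.sup_le fun t _ => Nat.le_zero.2 ?_)
  rw [h]
  simp [w_zero hw0]

lemma Wblk_atom (hw0 : ∀ a : F, w a = 0 ↔ a = 0) (i : ι) (t : Fin (k i)) (a : F) :
    Wblk w (atom i t a) i = w a := by
  unfold atom Wblk
  rw [sing_apply_same]
  apply le_antisymm
  · refine Finset.sup_le fun s _ => ?_
    by_cases h : s = t
    · simp [h]
    · simp [h, w_zero hw0]
  · have h := Finset.le_sup (f := fun s => w (if s = t then a else 0)) (Finset.mem_univ t)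
    simpa using h

lemma atom_ne_zero {i : ι} {t : Fin (k i)} {a : F} (ha : a ≠ 0) : atom i t a ≠ 0 := by
  intro h
  have : atom i t a i t = 0 := by rw [h]; rfl
  rw [atom, sing_apply_same] at this
  simp at this
  exact ha this

lemma suppB_atom (i : ι) (t : Fin (k i)) (a : F) : suppB (atom i t a) ⊆ {i} :=
  suppB_sing _ _

lemma eq_sum_atoms {b : F} (hb : b ≠ 0) (v : ∀ i, Fin (k i) → F) :
    v = ∑ i ∈ Finset.univ, ∑ t ∈ Finset.univ, (v i t * b⁻¹) • atom i t b := by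
  funext l s
  simp only [Finset.sum_apply, Pi.smul_apply, smul_eq_mul]
  rw [Finset.sum_eq_single l ?h1 (fun h => absurd (Finset.mem_univ l) h)]
  · rw [Finset.sum_eq_single s ?h2 (fun h => absurd (Finset.mem_univ s) h)]
    · rw [atom, sing_apply_same]
      simp only [if_pos rfl, eq_self_iff_true, if_true]
      field_simp
    · intro t _ hts
      rw [atom, sing_apply_same]
      simp [Ne.symm hts]
  · intro i _ hil
    refine Finset.sum_eq_zero fun t _ => ?_
    rw [atom, sing_apply_ne (Ne.symm hil)]
    simp

/-- isometry inverse is an isometry -/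
lemma iso_symm {T : (∀ i, Fin (k i) → F) ≃ₗ[F] ∀ i, Fin (k i) → F}
    (hT : ∀ u, omegaW w (T u) = omegaW w u) :
    ∀ u, omegaW w (T.symm u) = omegaW w u := by
  intro u
  have h := hT (T.symm u)
  rw [T.apply_symm_apply] at h
  exact h.symm

/-- L1 : isometries do not increase levels of supports -/
lemma supp_lev_le (hw0 : ∀ a : F, w a = 0 ↔ a = 0)
    {T : (∀ i, Fin (k i) → F) ≃ₗ[F] ∀ i, Fin (k i) → F}
    (hT : ∀ u, omegaW w (T u) = omegaW w u)
    (v : ∀ i, Fin (k i) → F) {j : ι} (hj : j ∈ suppB (T v)) :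
    ∃ i ∈ suppB v, lev j ≤ lev i := by
  obtain ⟨b, hb, hwb⟩ := exists_mw (w := w)
  have hv := eq_sum_atoms hb v
  have hTv : T v = ∑ i ∈ Finset.univ, ∑ t ∈ Finset.univ,
      (v i t * b⁻¹) • T (atom i t b) := by
    conv_lhs => rw [hv]
    simp only [map_sum, map_smul]
  rw [hTv] at hj
  obtain ⟨i, _, hj2⟩ := suppB_sum_subset hj
  obtain ⟨t, _, hj3⟩ := suppB_sum_subset hj2
  rw [mem_suppB, Pi.smul_apply] at hj3
  have hvit : v i t ≠ 0 := by
    intro h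
    rw [h] at hj3
    simp at hj3
  have hj4 : j ∈ suppB (T (atom i t b)) := by
    rw [mem_suppB]
    intro h
    rw [h] at hj3
    simp at hj3
  refine ⟨i, mem_suppB.2 (fun h => hvit (by rw [h]; rfl)), ?_⟩
  -- use omega bound
  have hsupp : suppB (atom i t b) ⊆ pIdeal i := by
    refine (suppB_atom i t b).trans ?_
    intro l hl
    rw [Finset.mem_singleton] at hl
    subst hl
    exact mem_pIdeal.2 le_rfl
  have hia : i ∈ suppB (atom i t b) := by
    rw [mem_suppB, atom, sing_apply_same]
    intro h
    have h2 := congrFun h t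
    simp only [if_pos rfl, Pi.zero_apply] at h2
    exact hb h2
  have homega : omegaW w (T (atom i t b)) = mw w + cp i * Mw w := by
    rw [hT, omega_single hsupp hia, Wblk_atom hw0, hwb]
    rfl
  have hbound := boundA hw0 (suppB_subset_idealOf _ hj4)
  rw [homega] at hbound
  have hMw := one_le_Mw (w := w) hw0
  have hcp : cp j ≤ cp i := by
    have h3 : cp j * Mw w ≤ cp i * Mw w := Nat.le_of_add_le_add_left hbound
    exact Nat.le_of_mul_le_mul_right h3 hMw
  have h1 := cp_add_one i
  have h2 := cp_add_one j
  omega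

end Dev4
section Dev5
set_option linter.unusedSectionVars false
set_option linter.unusedVariables false
variable [Fintype ι] [PartialOrder ι] [Field F] [Fintype F] {k : ι → ℕ}
variable {w : F → ℕ}

/-- truncation to a fixed level -/
def trunc [Fintype ι] [PartialOrder ι] {k : ι → ℕ} (n : ℕ) (x : ∀ i, Fin (k i) → F) :
    ∀ i, Fin (k i) → F :=
  fun j => if lev j = n then x j else 0

lemma trunc_apply_of_lev {n : ℕ} {x : ∀ i, Fin (k i) → F} {j : ι} (h : lev j = n) :
    trunc n x j = x j := if_pos h

lemma trunc_apply_of_ne {n : ℕ} {x : ∀ i, Fin (k i) → F} {j : ι} (h : lev j ≠ n) :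
    trunc n x j = 0 := if_neg h

lemma trunc_add (n : ℕ) (x y : ∀ i, Fin (k i) → F) :
    trunc n (x + y) = trunc n x + trunc n y := by
  funext j
  by_cases h : lev j = n
  · simp [trunc_apply_of_lev h]
  · simp [trunc_apply_of_ne h]

lemma trunc_sub (n : ℕ) (x y : ∀ i, Fin (k i) → F) :
    trunc n (x - y) = trunc n x - trunc n y := by
  funext j
  by_cases h : lev j = n
  · simp [trunc_apply_of_lev h]
  · simp [trunc_apply_of_ne h]

lemma trunc_smul (n : ℕ) (a : F) (x : ∀ i, Fin (k i) → F) :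
    trunc n (a • x) = a • trunc n x := by
  funext j
  by_cases h : lev j = n
  · simp [trunc_apply_of_lev h]
  · simp [trunc_apply_of_ne h]

lemma trunc_zero (n : ℕ) : trunc n (0 : ∀ i, Fin (k i) → F) = 0 := by
  funext j
  by_cases h : lev j = n
  · simp [trunc_apply_of_lev h]
  · simp [trunc_apply_of_ne h]

lemma trunc_sum {α : Type*} (n : ℕ) (s : Finset α) (f : α → ∀ i, Fin (k i) → F) :
    trunc n (∑ x ∈ s, f x) = ∑ x ∈ s, trunc n (f x) := by
  classical
  induction s using Finset.induction_on with
  | empty => simp [trunc_zero]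
  | insert a s' hx ih => rw [Finset.sum_insert hx, Finset.sum_insert hx,
      trunc_add, ih]

lemma mem_suppB_trunc {n : ℕ} {x : ∀ i, Fin (k i) → F} {j : ι} :
    j ∈ suppB (trunc n x) ↔ lev j = n ∧ x j ≠ 0 := by
  rw [mem_suppB]
  by_cases h : lev j = n
  · rw [trunc_apply_of_lev h]; exact ⟨fun h2 => ⟨h, h2⟩, fun h2 => h2.2⟩
  · rw [trunc_apply_of_ne h]; simp [h]

lemma trunc_eq_self {n : ℕ} {x : ∀ i, Fin (k i) → F}
    (h : ∀ j, x j ≠ 0 → lev j = n) : trunc n x = x := by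
  funext j
  by_cases hj : lev j = n
  · exact trunc_apply_of_lev hj
  · rw [trunc_apply_of_ne hj]
    by_contra hc
    exact hj (h j fun h0 => hc h0.symm)

/-- L2 : image support level bound -/
lemma supp_lev_le' (hw0 : ∀ a : F, w a = 0 ↔ a = 0)
    {T : (∀ i, Fin (k i) → F) ≃ₗ[F] ∀ i, Fin (k i) → F}
    (hT : ∀ u, omegaW w (T u) = omegaW w u)
    {v : ∀ i, Fin (k i) → F} {n : ℕ} (hv : ∀ m, v m ≠ 0 → lev m ≤ n)
    {j : ι} (hj : (T v) j ≠ 0) : lev j ≤ n := by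
  obtain ⟨i, hi, hle⟩ := supp_lev_le hw0 hT v (mem_suppB.2 hj)
  exact hle.trans (hv i (mem_suppB.1 hi))

/-- L3 : B' ∘ B = id on level-n vectors -/
lemma truncTsymm_truncT (hw0 : ∀ a : F, w a = 0 ↔ a = 0)
    {T : (∀ i, Fin (k i) → F) ≃ₗ[F] ∀ i, Fin (k i) → F}
    (hT : ∀ u, omegaW w (T u) = omegaW w u)
    {v : ∀ i, Fin (k i) → F} {n : ℕ} (hv : ∀ j, v j ≠ 0 → lev j = n) :
    trunc n (T.symm (trunc n (T v))) = v := by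
  set lowv := T v - trunc n (T v) with hlowv
  have hlow : ∀ m, lowv m ≠ 0 → lev m < n := by
    intro m hm
    rw [hlowv, Pi.sub_apply] at hm
    by_cases h : lev m = n
    · rw [trunc_apply_of_lev h] at hm; simp at hm
    · rw [trunc_apply_of_ne h, sub_zero] at hm
      exact lt_of_le_of_ne (supp_lev_le' hw0 hT (fun i hi => le_of_eq (hv i hi)) hm) h
  have heq : T.symm (trunc n (T v)) = v - T.symm lowv := by
    rw [hlowv]
    rw [map_sub, T.symm_apply_apply]
    abel
  rw [heq]
  funext j
  by_cases h : lev j = n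
  · rw [trunc_apply_of_lev h, Pi.sub_apply]
    have : T.symm lowv j = 0 := by
      by_contra hc
      obtain ⟨m, hm, hle⟩ := supp_lev_le hw0 (iso_symm hT) lowv (mem_suppB.2 hc)
      have h2 := lt_of_le_of_lt hle (hlow m (mem_suppB.1 hm))
      rw [h] at h2
      exact lt_irrefl n h2
    rw [this, sub_zero]
  · rw [trunc_apply_of_ne h]
    by_contra hc
    exact h (hv j fun h0 => hc h0.symm)

end Dev5
section Dev6
set_option linter.unusedSectionVars false
set_option linter.unusedVariables false
variable [Fintype ι] [PartialOrder ι] [Field F] [Fintype F] {k : ι → ℕ}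
variable {w : F → ℕ}

/-- total block weight -/
def Om (w : F → ℕ) {k : ι → ℕ} (x : ∀ i, Fin (k i) → F) : ℕ :=
  ∑ j ∈ Finset.univ, Wblk w x j

lemma Om_zero (hw0 : ∀ a : F, w a = 0 ↔ a = 0) : Om w (0 : ∀ i, Fin (k i) → F) = 0 :=
  Finset.sum_eq_zero fun j _ => Wblk_apply_zero hw0 rfl

lemma Om_single (hw0 : ∀ a : F, w a = 0 ↔ a = 0) {x : ∀ i, Fin (k i) → F} {i : ι}
    (h : suppB x ⊆ {i}) : Om w x = Wblk w x i := by
  refine Finset.sum_eq_single i (fun l _ hl => ?_) (fun h => absurd (Finset.mem_univ i) h)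
  refine Wblk_apply_zero hw0 ?_
  by_contra hc
  exact hl (Finset.mem_singleton.1 (h (mem_suppB.2 hc)))

lemma Wblk_sum_le (hw0 : ∀ a : F, w a = 0 ↔ a = 0)
    (hwadd : ∀ a b : F, w (a + b) ≤ w a + w b)
    {α : Type*} (s : Finset α) (f : α → ∀ i, Fin (k i) → F) (j : ι) :
    Wblk w (∑ x ∈ s, f x) j ≤ ∑ x ∈ s, Wblk w (f x) j := by
  classical
  induction s using Finset.induction_on with
  | empty => simp [Wblk_apply_zero hw0]
  | insert a s' hx ih =>
    rw [Finset.sum_insert hx, Finset.sum_insert hx]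
    exact (Wblk_add_le hwadd _ _ j).trans (Nat.add_le_add_left ih _)

lemma Om_sum_le (hw0 : ∀ a : F, w a = 0 ↔ a = 0)
    (hwadd : ∀ a b : F, w (a + b) ≤ w a + w b)
    {α : Type*} (s : Finset α) (f : α → ∀ i, Fin (k i) → F) :
    Om w (∑ x ∈ s, f x) ≤ ∑ x ∈ s, Om w (f x) := by
  unfold Om
  rw [Finset.sum_comm]
  exact Finset.sum_le_sum fun j _ => Wblk_sum_le hw0 hwadd s f j

lemma lv_trunc {n : ℕ} {x : ∀ i, Fin (k i) → F} :
    ∀ j, trunc n x j ≠ 0 → lev j = n := by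
  intro j hj
  by_contra h
  exact hj (trunc_apply_of_ne h)

/-- symm version of L3 -/
lemma truncT_truncTsymm (hw0 : ∀ a : F, w a = 0 ↔ a = 0)
    {T : (∀ i, Fin (k i) → F) ≃ₗ[F] ∀ i, Fin (k i) → F}
    (hT : ∀ u, omegaW w (T u) = omegaW w u)
    {y : ∀ i, Fin (k i) → F} {n : ℕ} (hy : ∀ j, y j ≠ 0 → lev j = n) :
    trunc n (T (trunc n (T.symm y))) = y := by
  have h := truncTsymm_truncT (T := T.symm) hw0 (iso_symm hT) hy
  rwa [LinearEquiv.symm_symm] at h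

/-- level-matching support elements of the image of a one-block vector are maximal -/
lemma top_mem_maxOf (hw0 : ∀ a : F, w a = 0 ↔ a = 0)
    {T : (∀ i, Fin (k i) → F) ≃ₗ[F] ∀ i, Fin (k i) → F}
    (hT : ∀ u, omegaW w (T u) = omegaW w u)
    {v : ∀ i, Fin (k i) → F} {i : ι} (hv : suppB v ⊆ {i})
    {j : ι} (hj : (T v) j ≠ 0) (hlev : lev i ≤ lev j) : j ∈ maxOf (T v) := by
  have hbnd : ∀ m, (T v) m ≠ 0 → lev m ≤ lev i := by
    intro m hm
    refine supp_lev_le' hw0 hT (v := v) (n := lev i) ?_ hm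
    intro l hl
    have : l = i := Finset.mem_singleton.1 (hv (mem_suppB.2 hl))
    exact this ▸ le_rfl
  refine mem_maxOf.2 ⟨suppB_subset_idealOf _ (mem_suppB.2 hj), ?_⟩
  intro l hl hjl
  by_contra hne
  obtain ⟨m, hm, hlm⟩ := mem_idealOf.1 hl
  have h1 : lev j < lev l := lev_strict_mono (lt_of_le_of_ne hjl hne)
  have h2 : lev l ≤ lev m := lev_mono hlm
  have h3 := hbnd m (mem_suppB.1 hm)
  omega

/-- L5 : single-block bound -/
lemma Om_trunc_le (hw0 : ∀ a : F, w a = 0 ↔ a = 0)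
    (hwadd : ∀ a b : F, w (a + b) ≤ w a + w b)
    {T : (∀ i, Fin (k i) → F) ≃ₗ[F] ∀ i, Fin (k i) → F}
    (hT : ∀ u, omegaW w (T u) = omegaW w u)
    {v : ∀ i, Fin (k i) → F} {i : ι} (hv : suppB v ⊆ {i}) :
    Om w (trunc (lev i) (T v)) ≤ Wblk w v i := by
  by_cases hv0 : v = 0
  · subst hv0
    rw [map_zero, trunc_zero, Om_zero hw0]
    exact Nat.zero_le _
  set n := lev i with hn
  set u := T v with hu
  set D := suppB (trunc n u) with hD
  have hOmD : Om w (trunc n u) = ∑ j ∈ D, Wblk w u j := by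
    unfold Om
    rw [← Finset.sum_subset (Finset.subset_univ D) (fun j _ hj => by
      rw [mem_suppB, not_not] at hj
      exact Wblk_apply_zero hw0 hj)]
    refine Finset.sum_congr rfl fun j hj => ?_
    exact Wblk_congr (trunc_apply_of_lev (mem_suppB_trunc.1 hj).1)
  rcases Finset.eq_empty_or_nonempty D with hDe | ⟨j₀, hj₀⟩
  · rw [hOmD, hDe]
    simp
  have hDmax : D ⊆ maxOf u := by
    intro j hj
    obtain ⟨hjlev, hjne⟩ := mem_suppB_trunc.1 hj
    exact top_mem_maxOf hw0 hT hv hjne (le_of_eq hjlev.symm)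
  have hvi : v i ≠ 0 := by
    intro h0
    exact hv0 ((eq_sing_of_suppB_subset hv).trans (by rw [h0, sing_zero]))
  have hideal : suppB v ⊆ pIdeal i := hv.trans (by
    intro l hl
    rw [Finset.mem_singleton] at hl
    subst hl
    exact mem_pIdeal.2 le_rfl)
  have homv : omegaW w u = Wblk w v i + cp i * Mw w := by
    rw [hu, hT, omega_single hideal (mem_suppB.2 hvi)]
    rfl
  have hb := boundB hw0 hDmax hj₀
  rw [homv] at hb
  have hcpj : (pIdeal j₀ \ {j₀}).card = cp i :=
    cp_eq_of_lev_eq ((mem_suppB_trunc.1 hj₀).1.trans hn.symm).symm ▸ rfl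
  rw [hcpj] at hb
  have hb2 : (∑ j ∈ D, Wblk w u j) + (maxOf u \ D).card * mw w ≤ Wblk w v i :=
    Nat.le_of_add_le_add_right hb
  rw [hOmD]
  exact le_trans (Nat.le_add_right _ _) hb2

/-- L6 -/
lemma Om_trunc_le' (hw0 : ∀ a : F, w a = 0 ↔ a = 0)
    (hwadd : ∀ a b : F, w (a + b) ≤ w a + w b)
    {T : (∀ i, Fin (k i) → F) ≃ₗ[F] ∀ i, Fin (k i) → F}
    (hT : ∀ u, omegaW w (T u) = omegaW w u)
    {v : ∀ i, Fin (k i) → F} {n : ℕ} (hv : ∀ j, v j ≠ 0 → lev j = n) :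
    Om w (trunc n (T v)) ≤ Om w v := by
  have h1 : T v = ∑ i ∈ Finset.univ, T (sing i (v i)) := by
    conv_lhs => rw [eq_sum_sing v]
    rw [map_sum]
  rw [h1, trunc_sum]
  refine le_trans (Om_sum_le hw0 hwadd _ _) (Finset.sum_le_sum fun i _ => ?_)
  by_cases h : v i = 0
  · rw [h, sing_zero, map_zero, trunc_zero, Om_zero hw0]
    exact Nat.zero_le _
  · have hlev : lev i = n := hv i h
    rw [← hlev]
    refine le_trans (Om_trunc_le hw0 hwadd hT (suppB_sing i (v i))) ?_
    exact le_of_eq (Wblk_congr (sing_apply_same i (v i)))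

/-- L7 -/
lemma Om_trunc_eq (hw0 : ∀ a : F, w a = 0 ↔ a = 0)
    (hwadd : ∀ a b : F, w (a + b) ≤ w a + w b)
    {T : (∀ i, Fin (k i) → F) ≃ₗ[F] ∀ i, Fin (k i) → F}
    (hT : ∀ u, omegaW w (T u) = omegaW w u)
    {v : ∀ i, Fin (k i) → F} {n : ℕ} (hv : ∀ j, v j ≠ 0 → lev j = n) :
    Om w (trunc n (T v)) = Om w v := by
  refine le_antisymm (Om_trunc_le' hw0 hwadd hT hv) ?_
  have h3 := truncTsymm_truncT hw0 hT hv
  have h := Om_trunc_le' hw0 hwadd (iso_symm hT) (T := T.symm)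
    (v := trunc n (T v)) (n := n) lv_trunc
  rwa [h3] at h

end Dev6
section Dev7
set_option linter.unusedSectionVars false
set_option linter.unusedVariables false
variable [Fintype ι] [PartialOrder ι] [Field F] [Fintype F] {k : ι → ℕ}
variable {w : F → ℕ}

lemma exists_Mw (hw0 : ∀ a : F, w a = 0 ↔ a = 0) : ∃ a : F, a ≠ 0 ∧ w a = Mw w := by
  obtain ⟨a, -, ha⟩ := Finset.exists_mem_eq_sup Finset.univ Finset.univ_nonempty w
  refine ⟨a, ?_, ha.symm⟩
  intro h0
  subst h0
  have h1 : w (1 : F) ≤ Mw w := w_le_Mw 1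
  unfold Mw at h1
  rw [ha, w_zero hw0] at h1
  exact one_ne_zero ((hw0 (1 : F)).1 (Nat.le_zero.1 h1))

lemma suppB_smul_subset (c : F) (x : ∀ i, Fin (k i) → F) :
    suppB (c • x) ⊆ suppB x := by
  intro l hl
  rw [mem_suppB] at hl ⊢
  intro h
  rw [Pi.smul_apply, h] at hl
  simp at hl

lemma sing_eq_zero_iff {i : ι} {x : Fin (k i) → F} : sing i x = 0 ↔ x = 0 := by
  constructor
  · intro h
    have := congrFun h i
    rwa [sing_apply_same] at this
  · rintro rfl
    exact sing_zero i

/-- the piece lemma : preimages of single blocks of the image are single blocks -/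
lemma piece (hw0 : ∀ a : F, w a = 0 ↔ a = 0)
    (hwneg : ∀ a : F, w (-a) = w a)
    (hwadd : ∀ a b : F, w (a + b) ≤ w a + w b)
    {T : (∀ i, Fin (k i) → F) ≃ₗ[F] ∀ i, Fin (k i) → F}
    (hT : ∀ u, omegaW w (T u) = omegaW w u)
    {v : ∀ i, Fin (k i) → F} {i : ι} (hv : suppB v ⊆ {i}) {j : ι}
    (hj : j ∈ suppB (trunc (lev i) (T v))) :
    ∃ p : ∀ i, Fin (k i) → F, suppB p ⊆ {i} ∧ p ≠ 0 ∧
      trunc (lev i) (T p) = sing j ((trunc (lev i) (T v)) j) := by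
  set n := lev i with hn
  set Bv := trunc n (T v) with hBv
  set y := sing j (Bv j) with hy
  have hjlev : lev j = n := (mem_suppB_trunc.1 hj).1
  have hyl : ∀ l, y l ≠ 0 → lev l = n := by
    intro l hl
    have hlj : l = j := Finset.mem_singleton.1 (suppB_sing j (Bv j) (mem_suppB.2 hl))
    exact hlj ▸ hjlev
  set p := trunc n (T.symm y) with hp
  have hBp : trunc n (T p) = y := truncT_truncTsymm hw0 hT hyl
  have hyj : y j = Bv j := sing_apply_same j (Bv j)
  have hBvj : Bv j ≠ 0 := mem_suppB.1 hj
  have hpne : p ≠ 0 := by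
    intro h
    rw [h, map_zero, trunc_zero] at hBp
    exact hBvj (by rw [← hyj, ← hBp]; rfl)
  refine ⟨p, ?_, hpne, hBp⟩
  -- now show supp p ⊆ {i}
  set q := v - p with hq
  have hBq : trunc n (T q) = Bv - y := by
    rw [hq, map_sub, trunc_sub, hBp, hBv]
  have hLp : ∀ l, p l ≠ 0 → lev l = n := by rw [hp]; exact lv_trunc
  have hLv : ∀ l, v l ≠ 0 → lev l = n := by
    intro l hl
    have : l = i := Finset.mem_singleton.1 (hv (mem_suppB.2 hl))
    exact this ▸ hn.symm ▸ rfl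
  have hLq : ∀ l, q l ≠ 0 → lev l = n := by
    intro l hl
    rw [hq, Pi.sub_apply] at hl
    by_cases h1 : v l = 0
    · by_cases h2 : p l = 0
      · rw [h1, h2] at hl; simp at hl
      · exact hLp l h2
    · exact hLv l h1
  have hOmp : Om w p = Wblk w (Bv) j := by
    have h1 := Om_trunc_eq hw0 hwadd hT hLp
    rw [hBp] at h1
    rw [← h1, hy, Om_single hw0 (suppB_sing _ _)]
    exact Wblk_congr (sing_apply_same _ _)
  have hOmq : Om w q = ∑ l ∈ Finset.univ.erase j, Wblk w Bv l := by
    have h1 := Om_trunc_eq hw0 hwadd hT hLq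
    rw [hBq] at h1
    rw [← h1]
    unfold Om
    rw [← Finset.add_sum_erase Finset.univ _ (Finset.mem_univ j)]
    have hz : Wblk w (Bv - y) j = 0 :=
      Wblk_apply_zero hw0 (by rw [Pi.sub_apply, hyj, sub_self])
    rw [hz, Nat.zero_add]
    refine Finset.sum_congr rfl fun l hl => ?_
    have hlj : l ≠ j := Finset.ne_of_mem_erase hl
    exact Wblk_congr (by rw [Pi.sub_apply, hy, sing_apply_ne hlj, sub_zero])
  have hOmv : Om w v = Wblk w v i := Om_single hw0 hv
  have hOmBv : Om w Bv = Om w v := by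
    rw [hBv]; exact Om_trunc_eq hw0 hwadd hT hLv
  have hsplit : Om w p + Om w q = Wblk w v i := by
    rw [hOmp, hOmq, ← hOmv, ← hOmBv]
    unfold Om
    rw [← Finset.add_sum_erase Finset.univ _ (Finset.mem_univ j)]
  -- decompose Om p and Om q at block i
  set A := ∑ l ∈ Finset.univ.erase i, Wblk w p l with hA
  have hOmp2 : Om w p = Wblk w p i + A := by
    unfold Om
    rw [← Finset.add_sum_erase Finset.univ _ (Finset.mem_univ i)]
  have hOmq2 : Om w q = Wblk w q i + A := by
    unfold Om
    rw [← Finset.add_sum_erase Finset.univ _ (Finset.mem_univ i)]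
    congr 1
    refine Finset.sum_congr rfl fun l hl => ?_
    have hli : l ≠ i := Finset.ne_of_mem_erase hl
    have hvl : v l = 0 := by
      by_contra hc
      exact hli (Finset.mem_singleton.1 (hv (mem_suppB.2 hc)))
    have : q l = (-p) l := by rw [hq, Pi.sub_apply, hvl, zero_sub]; rfl
    rw [Wblk_congr this, Wblk_neg hwneg]
  have hvpq : v = p + q := by rw [hq]; abel
  have htri : Wblk w v i ≤ Wblk w p i + Wblk w q i := by
    rw [hvpq]
    exact Wblk_add_le hwadd p q i
  have hA0 : A = 0 := by omega
  intro l hl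
  rw [mem_suppB] at hl
  by_contra hli
  rw [Finset.mem_singleton] at hli
  have hmem : l ∈ Finset.univ.erase i := Finset.mem_erase.2 ⟨hli, Finset.mem_univ l⟩
  have : Wblk w p l = 0 := by
    have hz : ∑ l ∈ Finset.univ.erase i, Wblk w p l = 0 := hA ▸ hA0
    exact (Finset.sum_eq_zero_iff.1 hz) l hmem
  exact hl ((Wblk_eq_zero_iff hw0).1 this)

end Dev7
section Dev8
set_option linter.unusedSectionVars false
set_option linter.unusedVariables false
variable [Fintype ι] [PartialOrder ι] [Field F] [Fintype F] {k : ι → ℕ}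
variable {w : F → ℕ}

/-- the image block of a block is well defined -/
lemma exists_block (hk : ∀ i, 0 < k i)
    (hw0 : ∀ a : F, w a = 0 ↔ a = 0)
    (hwneg : ∀ a : F, w (-a) = w a)
    (hwadd : ∀ a b : F, w (a + b) ≤ w a + w b)
    {T : (∀ i, Fin (k i) → F) ≃ₗ[F] ∀ i, Fin (k i) → F}
    (hT : ∀ u, omegaW w (T u) = omegaW w u) (i : ι) :
    ∃ j, lev j = lev i ∧
      ∀ (x : Fin (k i) → F) l, (trunc (lev i) (T (sing i x))) l ≠ 0 → l = j := by
  set n := lev i with hn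
  set v₀ : ∀ i, Fin (k i) → F := sing i (fun _ => 1) with hv₀
  have hLv₀ : ∀ l, v₀ l ≠ 0 → lev l = n := by
    intro l hl
    have : l = i := Finset.mem_singleton.1 (suppB_sing _ _ (mem_suppB.2 hl))
    exact this ▸ rfl
  have hBv₀ : trunc n (T v₀) ≠ 0 := by
    intro h
    have h2 := truncTsymm_truncT hw0 hT hLv₀
    rw [h, map_zero, trunc_zero] at h2
    have h3 := congrFun (congrFun h2.symm i) ⟨0, hk i⟩
    rw [hv₀, sing_apply_same] at h3
    simp at h3
  have hex : ∃ j, (trunc n (T v₀)) j ≠ 0 := by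
    by_contra h
    push_neg at h
    exact hBv₀ (funext h)
  obtain ⟨j, hj⟩ := hex
  have hjlev : lev j = n := lv_trunc j hj
  refine ⟨j, hjlev, ?_⟩
  intro x l hl
  by_contra hne
  -- two pieces in conflicting blocks
  obtain ⟨p, hps, hpne, hpB⟩ := piece hw0 hwneg hwadd hT (suppB_sing i (fun _ => (1:F)))
    (mem_suppB.2 hj)
  obtain ⟨p', hps', hpne', hpB'⟩ := piece hw0 hwneg hwadd hT (suppB_sing i x)
    (mem_suppB.2 hl)
  have hpi : p i ≠ 0 := by
    intro h
    refine hpne ?_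
    rw [eq_sing_of_suppB_subset hps, h, sing_zero]
  have hpi' : p' i ≠ 0 := by
    intro h
    refine hpne' ?_
    rw [eq_sing_of_suppB_subset hps', h, sing_zero]
  have hext : ∃ t, p' i t ≠ 0 := by
    by_contra h
    push_neg at h
    exact hpi' (funext h)
  obtain ⟨t, ht⟩ := hext
  obtain ⟨a, ha0, haM⟩ := exists_Mw (w := w) hw0
  set lam := a * (p' i t)⁻¹ with hlam
  have hlamt : lam * p' i t = a := by
    rw [hlam, mul_assoc, inv_mul_cancel₀ ht, mul_one]
  set z := p + lam • p' with hz
  have hsz : suppB z ⊆ {i} := by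
    refine (suppB_add_subset _ _).trans ?_
    intro m hm
    rcases Finset.mem_union.1 hm with h | h
    · exact hps h
    · exact hps' (suppB_smul_subset lam p' h)
  have hLz : ∀ m, z m ≠ 0 → lev m = n := by
    intro m hm
    have : m = i := Finset.mem_singleton.1 (hsz (mem_suppB.2 hm))
    exact this ▸ rfl
  have hLp : ∀ m, p m ≠ 0 → lev m = n := by
    intro m hm
    have : m = i := Finset.mem_singleton.1 (hps (mem_suppB.2 hm))
    exact this ▸ rfl
  have hLp' : ∀ m, (lam • p') m ≠ 0 → lev m = n := by
    intro m hm
    have : m = i := Finset.mem_singleton.1 (hps' (suppB_smul_subset _ _ (mem_suppB.2 hm)))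
    exact this ▸ rfl
  -- upper bound
  have hup : Om w (trunc n (T z)) ≤ Mw w := by
    rw [Om_trunc_eq hw0 hwadd hT hLz, Om_single hw0 hsz]
    exact Wblk_le_Mw z i
  -- compute trunc n (T z)
  have hBz : trunc n (T z) = sing j ((trunc n (T v₀)) j)
      + sing l (lam • (trunc n (T (sing i x))) l) := by
    rw [hz, map_add, trunc_add, hpB, map_smul, trunc_smul, hpB', sing_smul]
  -- lower bound
  have hlow : Wblk w (trunc n (T z)) j + Wblk w (trunc n (T z)) l
      ≤ Om w (trunc n (T z)) := by
    have hsub : ({j, l} : Finset ι) ⊆ Finset.univ := Finset.subset_univ _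
    have hpair : ∑ m ∈ ({j, l} : Finset ι), Wblk w (trunc n (T z)) m
        = Wblk w (trunc n (T z)) j + Wblk w (trunc n (T z)) l := by
      rw [Finset.sum_pair (Ne.symm hne)]
    rw [← hpair]
    exact Finset.sum_le_sum_of_subset hsub
  have hWj : Wblk w (trunc n (T z)) j = Wblk w p i := by
    have h1 : (trunc n (T z)) j = (trunc n (T p)) j := by
      have e1 : (trunc n (T z)) j = sing j ((trunc n (T v₀)) j) j
          + sing l (lam • (trunc n (T (sing i x))) l) j := by rw [hBz]; rfl
      rw [e1, sing_apply_ne (Ne.symm hne), add_zero, sing_apply_same, hpB,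
        sing_apply_same]
      try rfl
    rw [Wblk_congr h1]
    have h2 : Om w (trunc n (T p)) = Om w p := Om_trunc_eq hw0 hwadd hT hLp
    rw [← Om_single hw0 hps, ← h2, hpB, Om_single hw0 (suppB_sing _ _)]
    try exact Wblk_congr (sing_apply_same _ _)
  have hWl : Wblk w (trunc n (T z)) l = Wblk w (lam • p') i := by
    have h1 : (trunc n (T z)) l = (trunc n (T (lam • p'))) l := by
      have e1 : (trunc n (T z)) l = sing j ((trunc n (T v₀)) j) l
          + sing l (lam • (trunc n (T (sing i x))) l) l := by rw [hBz]; rfl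
      rw [e1, sing_apply_ne hne, zero_add, sing_apply_same, map_smul, trunc_smul,
        hpB', Pi.smul_apply, sing_apply_same]
      try rfl
    rw [Wblk_congr h1]
    have hsupp : suppB (lam • p') ⊆ {i} := (suppB_smul_subset _ _).trans hps'
    have h2 : Om w (trunc n (T (lam • p'))) = Om w (lam • p') :=
      Om_trunc_eq hw0 hwadd hT hLp'
    have h3 : suppB (trunc n (T (lam • p'))) ⊆ {l} := by
      intro m hm
      rw [mem_suppB] at hm
      have : (trunc n (T (lam • p'))) m = (lam • sing l ((trunc n (T (sing i x))) l)) m := by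
        rw [map_smul, trunc_smul, hpB']
      rw [this] at hm
      have := suppB_smul_subset lam _ (mem_suppB.2 hm)
      exact suppB_sing _ _ this
    rw [← Om_single hw0 h3, h2, Om_single hw0 hsupp]
  have hmwp : mw w ≤ Wblk w p i := mw_le_Wblk hw0 hpi
  have hMwl : Mw w ≤ Wblk w (lam • p') i := by
    have h1 : w ((lam • p') i t) ≤ Wblk w (lam • p') i := le_Wblk _ i t
    have h2 : (lam • p') i t = a := by
      rw [Pi.smul_apply, Pi.smul_apply, smul_eq_mul, hlamt]
    rw [h2, haM] at h1
    exact h1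
  have hmw1 := one_le_mw (w := w) hw0
  omega

end Dev8
section Dev9
set_option linter.unusedSectionVars false
set_option linter.unusedVariables false
variable [Fintype ι] [PartialOrder ι] [Field F] [Fintype F] {k : ι → ℕ}
variable {w : F → ℕ}

/-- the shape (one-block structure) property of a map between two blocks -/
def ShapeAt [Fintype ι] [PartialOrder ι] [Field F] [Fintype F] {k : ι → ℕ}
    (w : F → ℕ) (T : (∀ i, Fin (k i) → F) →ₗ[F] ∀ i, Fin (k i) → F) (i i' : ι) : Prop :=
  ∀ v : ∀ i, Fin (k i) → F, suppB v ⊆ {i} →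
    ∃ u γ : ∀ i, Fin (k i) → F, T v = u + γ ∧ suppB u ⊆ {i'} ∧
      (∀ l ∈ suppB γ, l < i') ∧ Wblk w v i = Wblk w u i'

lemma InT_iff {T : (∀ i, Fin (k i) → F) →ₗ[F] ∀ i, Fin (k i) → F} :
    InT w T ↔ ∀ i, ShapeAt w T i i := Iff.rfl

/-- the key structure lemma at a single block -/
lemma shape_of_block (hw0 : ∀ a : F, w a = 0 ↔ a = 0)
    (hwadd : ∀ a b : F, w (a + b) ≤ w a + w b)
    {T : (∀ i, Fin (k i) → F) ≃ₗ[F] ∀ i, Fin (k i) → F}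
    (hT : ∀ u, omegaW w (T u) = omegaW w u) (i : ι) {j : ι}
    (hjlev : lev j = lev i)
    (hall : ∀ (x : Fin (k i) → F) l, (trunc (lev i) (T (sing i x))) l ≠ 0 → l = j) :
    ShapeAt w T.toLinearMap i j := by
  intro v hv
  by_cases hv0 : v = 0
  · refine ⟨0, 0, by simp [hv0], ?_, ?_, ?_⟩
    · intro l hl; exact absurd rfl (mem_suppB.1 hl)
    · intro l hl; exact absurd rfl (mem_suppB.1 hl)
    · rw [hv0, Wblk_apply_zero hw0 rfl, Wblk_apply_zero hw0 rfl]
  set n := lev i with hn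
  have hLv : ∀ l, v l ≠ 0 → lev l = n := by
    intro l hl
    have : l = i := Finset.mem_singleton.1 (hv (mem_suppB.2 hl))
    exact this ▸ rfl
  set Bv := trunc n (T v) with hBv
  have hsupp : suppB Bv ⊆ {j} := by
    intro l hl
    rw [mem_suppB] at hl
    have hveq : trunc n (T v) = trunc n (T (sing i (v i))) := by
      rw [← eq_sing_of_suppB_subset hv]
    rw [hBv, hveq] at hl
    exact Finset.mem_singleton.2 (hall (v i) l hl)
  have hBvne : Bv ≠ 0 := by
    intro h
    have h2 := truncTsymm_truncT hw0 hT hLv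
    rw [← hBv, h, map_zero, trunc_zero] at h2
    exact hv0 h2.symm
  have hjmem : j ∈ suppB Bv := by
    have : ∃ l, Bv l ≠ 0 := by
      by_contra h
      push_neg at h
      exact hBvne (funext h)
    obtain ⟨l, hl⟩ := this
    have := hsupp (mem_suppB.2 hl)
    rw [Finset.mem_singleton] at this
    exact this ▸ mem_suppB.2 hl
  have hBvj : Bv j = (T v) j := trunc_apply_of_lev (hn ▸ hjlev)
  have hTvj : (T v) j ≠ 0 := by
    have := mem_suppB.1 hjmem
    rwa [hBvj] at this
  have hWj : Wblk w (T v) j = Wblk w v i := by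
    rw [← Wblk_congr hBvj, ← Om_single hw0 hsupp, hBv, Om_trunc_eq hw0 hwadd hT hLv,
      Om_single hw0 hv]
  -- tightness : j is the only maximal element
  have hjmax : j ∈ maxOf (T v) := top_mem_maxOf hw0 hT hv hTvj (le_of_eq hjlev.symm)
  have hvi : v i ≠ 0 := by
    intro h0
    exact hv0 ((eq_sing_of_suppB_subset hv).trans (by rw [h0, sing_zero]))
  have hideal : suppB v ⊆ pIdeal i := hv.trans (by
    intro l hl
    rw [Finset.mem_singleton] at hl
    subst hl
    exact mem_pIdeal.2 le_rfl)
  have homv : omegaW w (T v) = Wblk w v i + cp i * Mw w := by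
    rw [hT, omega_single hideal (mem_suppB.2 hvi)]
    rfl
  have hb := boundB hw0 (Finset.singleton_subset_iff.2 hjmax) (Finset.mem_singleton_self j)
  rw [homv, Finset.sum_singleton] at hb
  have hcpj : (pIdeal j \ {j}).card = cp i := cp_eq_of_lev_eq hjlev
  rw [hcpj, hWj] at hb
  have hb2 : (maxOf (T v) \ {j}).card * mw w = 0 := by
    have := Nat.le_of_add_le_add_right hb
    omega
  have hmax : maxOf (T v) ⊆ {j} := by
    rw [← Finset.sdiff_eq_empty_iff_subset]
    refine Finset.card_eq_zero.1 ?_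
    have hmw := one_le_mw (w := w) hw0
    by_contra hc
    have : 1 ≤ (maxOf (T v) \ {j}).card := Nat.one_le_iff_ne_zero.2 hc
    nlinarith [hb2]
  -- produce the decomposition
  refine ⟨sing j ((T v) j), T v - sing j ((T v) j), by abel, suppB_sing _ _, ?_, ?_⟩
  · intro l hl
    rw [mem_suppB, Pi.sub_apply] at hl
    by_cases hlj : l = j
    · subst hlj
      rw [sing_apply_same, sub_self] at hl
      exact absurd rfl hl
    · rw [sing_apply_ne hlj, sub_zero] at hl
      obtain ⟨m, hm, hlm⟩ := exists_maxOf_ge (suppB_subset_idealOf _ (mem_suppB.2 hl))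
      have : m = j := Finset.mem_singleton.1 (hmax hm)
      exact lt_of_le_of_ne (this ▸ hlm) hlj
  · rw [← hWj]
    exact (Wblk_congr (sing_apply_same _ _)).symm

/-- shapes force block dimensions to grow -/
lemma shape_k_le (hw0 : ∀ a : F, w a = 0 ↔ a = 0)
    {T : (∀ i, Fin (k i) → F) ≃ₗ[F] ∀ i, Fin (k i) → F} {i i' : ι}
    (hs : ShapeAt w T.toLinearMap i i') : k i ≤ k i' := by
  classical
  set f : (Fin (k i) → F) → (Fin (k i') → F) := fun x => (T (sing i x)) i' with hf
  have hinj : Function.Injective f := by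
    intro x x' hxx
    have hlin : T (sing i (x - x')) i' = 0 := by
      have : sing i (x - x') = sing i x - sing i x' := by
        funext l
        by_cases h : l = i
        · subst h; simp [sing_apply_same]
        · simp [sing_apply_ne h]
      rw [this, map_sub, Pi.sub_apply]
      rw [hf] at hxx
      rw [show (T (sing i x)) i' = (T (sing i x')) i' from hxx, sub_self]
    obtain ⟨u, γ, hdec, hus, hγ, hW⟩ := hs (sing i (x - x')) (suppB_sing _ _)
    have hγi' : γ i' = 0 := by
      by_contra hc
      exact absurd (hγ i' (mem_suppB.2 hc)) (lt_irrefl i')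
    have hui' : u i' = 0 := by
      have h2 := congrFun hdec i'
      rw [Pi.add_apply, hγi', add_zero] at h2
      rw [← h2]
      exact hlin
    have hW0 : Wblk w (sing i (x - x')) i = 0 := by
      rw [hW]
      exact Wblk_apply_zero hw0 hui'
    have := (Wblk_eq_zero_iff hw0).1 hW0
    rw [sing_apply_same] at this
    exact sub_eq_zero.1 this
  have hcard := Fintype.card_le_of_injective f hinj
  rw [Fintype.card_fun, Fintype.card_fun, Fintype.card_fin, Fintype.card_fin] at hcard
  exact (Nat.pow_le_pow_iff_right Fintype.one_lt_card).1 hcard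

end Dev9
section Dev10
set_option linter.unusedSectionVars false
set_option linter.unusedVariables false
variable [Fintype ι] [PartialOrder ι] [Field F] [Fintype F] {k : ι → ℕ}
variable {w : F → ℕ}

lemma shape_inverse (hk : ∀ i, 0 < k i) (hw0 : ∀ a : F, w a = 0 ↔ a = 0)
    {T : (∀ i, Fin (k i) → F) ≃ₗ[F] ∀ i, Fin (k i) → F}
    (hT : ∀ u, omegaW w (T u) = omegaW w u) {f g : ι → ι}
    (hfl : ∀ i, lev (f i) = lev i)
    (hgl : ∀ i, lev (g i) = lev i)
    (hf : ∀ i, ShapeAt w T.toLinearMap i (f i))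
    (hg : ∀ i, ShapeAt w T.symm.toLinearMap i (g i)) (i : ι) : g (f i) = i := by
  set x₀ : Fin (k i) → F := fun _ => 1 with hx₀
  set v := sing i x₀ with hv
  obtain ⟨u, γ, hdec, hus, hγ, hW⟩ := hf i (v := v) (suppB_sing _ _)
  have hWv : Wblk w v i ≠ 0 := by
    intro h
    have := (Wblk_eq_zero_iff hw0).1 h
    rw [hv, sing_apply_same] at this
    have := congrFun this ⟨0, hk i⟩
    simp [hx₀] at this
  have hWu : Wblk w u (f i) ≠ 0 := by rw [← hW]; exact hWv
  obtain ⟨u₂, γ₂, hdec₂, hus₂, hγ₂, hW₂⟩ := hg (f i) (v := u) hus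
  have hWu₂ : Wblk w u₂ (g (f i)) ≠ 0 := by rw [← hW₂]; exact hWu
  have hu₂ne : u₂ (g (f i)) ≠ 0 := by
    intro h
    exact hWu₂ (Wblk_apply_zero hw0 h)
  set j₀ := g (f i) with hj₀
  -- v = u₂ + γ₂ + T.symm γ
  have hvdec : v = u₂ + γ₂ + T.symm γ := by
    have h1 : T.symm (T v) = v := T.symm_apply_apply v
    have h2 : T v = u + γ := hdec
    rw [← h1, h2, map_add]
    have h3 : T.symm u = u₂ + γ₂ := hdec₂
    rw [h3]
  have hγ₂j₀ : γ₂ j₀ = 0 := by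
    by_contra hc
    exact absurd (hγ₂ j₀ (mem_suppB.2 hc)) (lt_irrefl j₀)
  have hTγj₀ : (T.symm γ) j₀ = 0 := by
    by_contra hc
    obtain ⟨m, hm, hle⟩ := supp_lev_le hw0 (iso_symm hT) γ (mem_suppB.2 hc)
    have h1 : m < f i := hγ m hm
    have h2 : lev m < lev (f i) := lev_strict_mono h1
    have h3 : lev j₀ = lev (f i) := hgl (f i)
    omega
  have hvj₀ : v j₀ ≠ 0 := by
    have := congrFun hvdec j₀
    rw [Pi.add_apply, Pi.add_apply, hγ₂j₀, hTγj₀, add_zero, add_zero] at this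
    rw [this]
    exact hu₂ne
  have := suppB_sing i x₀ (mem_suppB.2 (hv ▸ hvj₀))
  exact Finset.mem_singleton.1 this

lemma shape_mono (hk : ∀ i, 0 < k i) (hw0 : ∀ a : F, w a = 0 ↔ a = 0)
    {T : (∀ i, Fin (k i) → F) ≃ₗ[F] ∀ i, Fin (k i) → F}
    (hT : ∀ u, omegaW w (T u) = omegaW w u) {f : ι → ι}
    (hfl : ∀ i, lev (f i) = lev i)
    (hf : ∀ i, ShapeAt w T.toLinearMap i (f i)) {l i : ι} (hli : l < i) :
    f l < f i := by
  have hlevli : lev l < lev i := lev_strict_mono hli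
  have hlevf : lev (f l) < lev (f i) := by rw [hfl, hfl]; exact hlevli
  have hne : f l ≠ f i := fun h => by rw [h] at hlevf; exact lt_irrefl _ hlevf
  have hnle : ¬ (f i ≤ f l) := fun h => by
    have := lev_mono h
    omega
  by_contra hcon
  have hnlefl : ¬ (f l ≤ f i) := hcon ∘ (fun h => lt_of_le_of_ne h hne)
  obtain ⟨b, hb, hwb⟩ := exists_mw (w := w)
  set v := atom l ⟨0, hk l⟩ b with hv
  set v' := atom i ⟨0, hk i⟩ b with hv'
  obtain ⟨u, γ, hdec, hus, hγ, hW⟩ := hf l (v := v) (suppB_atom _ _ _)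
  obtain ⟨u', γ', hdec', hus', hγ', hW'⟩ := hf i (v := v') (suppB_atom _ _ _)
  have hWv : Wblk w v l = mw w := by rw [hv, Wblk_atom hw0, hwb]
  have hWv' : Wblk w v' i = mw w := by rw [hv', Wblk_atom hw0, hwb]
  have hmw1 := one_le_mw (w := w) hw0
  have hufl : u (f l) ≠ 0 := by
    intro h
    have : Wblk w u (f l) = 0 := Wblk_apply_zero hw0 h
    rw [← hW, hWv] at this
    omega
  have hufi : u' (f i) ≠ 0 := by
    intro h
    have : Wblk w u' (f i) = 0 := Wblk_apply_zero hw0 h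
    rw [← hW', hWv'] at this
    omega
  set x := T (v + v') with hx
  have hxdec : x = u + γ + (u' + γ') := by
    rw [hx, map_add]
    have h1 : T v = u + γ := hdec
    have h2 : T v' = u' + γ' := hdec'
    rw [h1, h2]
  -- values at the two blocks
  have happly : ∀ m, x m = u m + γ m + (u' m + γ' m) := by
    intro m
    rw [hxdec]
    rfl
  have husm : ∀ m, m ≠ f l → u m = 0 := by
    intro m hm
    by_contra hc
    exact hm (Finset.mem_singleton.1 (hus (mem_suppB.2 hc)))
  have husm' : ∀ m, m ≠ f i → u' m = 0 := by
    intro m hm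
    by_contra hc
    exact hm (Finset.mem_singleton.1 (hus' (mem_suppB.2 hc)))
  have hγm : ∀ m, ¬ (m < f l) → γ m = 0 := by
    intro m hm
    by_contra hc
    exact hm (hγ m (mem_suppB.2 hc))
  have hγm' : ∀ m, ¬ (m < f i) → γ' m = 0 := by
    intro m hm
    by_contra hc
    exact hm (hγ' m (mem_suppB.2 hc))
  have hxfl : x (f l) = u (f l) := by
    rw [happly, hγm _ (lt_irrefl _), husm' _ hne, hγm' _ (fun h => hnlefl h.le)]
    simp
  have hxfi : x (f i) = u' (f i) := by
    rw [happly, hγm _ (fun h => hnle h.le), husm _ (Ne.symm hne), hγm' _ (lt_irrefl _)]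
    simp
  -- support of x
  have hsx : ∀ m, x m ≠ 0 → m ≤ f i ∨ m ≤ f l := by
    intro m hm
    rw [happly] at hm
    by_cases h1 : u m = 0
    · by_cases h2 : γ m = 0
      · by_cases h3 : u' m = 0
        · by_cases h4 : γ' m = 0
          · rw [h1, h2, h3, h4] at hm; simp at hm
          · exact Or.inl (hγ' m (mem_suppB.2 h4)).le
        · refine Or.inl ?_
          have : m = f i := Finset.mem_singleton.1 (hus' (mem_suppB.2 h3))
          exact this ▸ le_rfl
      · exact Or.inr (hγ m (mem_suppB.2 h2)).le
    · refine Or.inr ?_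
      have : m = f l := Finset.mem_singleton.1 (hus (mem_suppB.2 h1))
      exact this ▸ le_rfl
  -- f l and f i are maximal in idealOf x
  have hflmax : f l ∈ maxOf x := by
    refine mem_maxOf.2 ⟨suppB_subset_idealOf _ (mem_suppB.2 (by rw [hxfl]; exact hufl)), ?_⟩
    intro m' hm' hle
    by_contra hne'
    have hlt : f l < m' := lt_of_le_of_ne hle hne'
    obtain ⟨m'', hm'', hm'le⟩ := mem_idealOf.1 hm'
    rcases hsx m'' (mem_suppB.1 hm'') with h | h
    · exact hnlefl (le_trans hlt.le (le_trans hm'le h))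
    · have : f l < f l := lt_of_lt_of_le hlt (le_trans hm'le h)
      exact lt_irrefl _ this
  have hfimax : f i ∈ maxOf x := by
    refine mem_maxOf.2 ⟨suppB_subset_idealOf _ (mem_suppB.2 (by rw [hxfi]; exact hufi)), ?_⟩
    intro m' hm' hle
    by_contra hne'
    have hlt : f i < m' := lt_of_le_of_ne hle hne'
    obtain ⟨m'', hm'', hm'le⟩ := mem_idealOf.1 hm'
    rcases hsx m'' (mem_suppB.1 hm'') with h | h
    · have : f i < f i := lt_of_lt_of_le hlt (le_trans hm'le h)
      exact lt_irrefl _ this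
    · exact hnle (le_trans hlt.le (le_trans hm'le h))
  -- the weight of v + v'
  have hvi0 : v i = 0 := by
    rw [hv]
    exact sing_apply_ne (ne_of_gt hli) _
  have hvv'i : (v + v') i = v' i := by rw [Pi.add_apply, hvi0, zero_add]
  have hv'ine : v' i ≠ 0 := by
    intro h
    have : Wblk w v' i = 0 := Wblk_apply_zero hw0 h
    rw [hWv'] at this
    omega
  have hsuppvv' : suppB (v + v') ⊆ pIdeal i := by
    refine (suppB_add_subset _ _).trans ?_
    intro m hm
    rcases Finset.mem_union.1 hm with h | h
    · have : m = l := Finset.mem_singleton.1 (suppB_atom _ _ _ h)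
      exact mem_pIdeal.2 (this ▸ hli.le)
    · have : m = i := Finset.mem_singleton.1 (suppB_atom _ _ _ h)
      exact mem_pIdeal.2 (this ▸ le_rfl)
  have homx : omegaW w x = mw w + cp i * Mw w := by
    rw [hx, hT, omega_single hsuppvv' (mem_suppB.2 (by rw [hvv'i]; exact hv'ine))]
    rw [Wblk_congr hvv'i, hWv']
    rfl
  -- bound
  have hDsub : ({f l, f i} : Finset ι) ⊆ maxOf x := by
    intro m hm
    rcases Finset.mem_insert.1 hm with h | h
    · exact h ▸ hflmax
    · exact (Finset.mem_singleton.1 h) ▸ hfimax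
  have hfiD : f i ∈ ({f l, f i} : Finset ι) := by
    rw [Finset.mem_insert, Finset.mem_singleton]
    exact Or.inr rfl
  have hb := boundB hw0 hDsub hfiD
  rw [homx, Finset.sum_pair hne] at hb
  have hcpfi : (pIdeal (f i) \ {f i}).card = cp i := cp_eq_of_lev_eq (hfl i)
  rw [hcpfi] at hb
  have hb2 := Nat.le_of_add_le_add_right hb
  have hWxfl : mw w ≤ Wblk w x (f l) := mw_le_Wblk hw0 (by rw [hxfl]; exact hufl)
  have hWxfi : mw w ≤ Wblk w x (f i) := mw_le_Wblk hw0 (by rw [hxfi]; exact hufi)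
  have : 2 * mw w ≤ mw w := by
    calc 2 * mw w = mw w + mw w := by ring
    _ ≤ Wblk w x (f l) + Wblk w x (f i) := Nat.add_le_add hWxfl hWxfi
    _ ≤ Wblk w x (f l) + Wblk w x (f i) + (maxOf x \ {f l, f i}).card * mw w :=
        Nat.le_add_right _ _
    _ ≤ mw w := hb2
  omega

end Dev10
section Dev11
set_option linter.unusedSectionVars false
set_option linter.unusedVariables false
variable [Fintype ι] [PartialOrder ι] [Field F] [Fintype F] {k : ι → ℕ}
variable {w : F → ℕ}

lemma main_shape (hk : ∀ i, 0 < k i) (hw0 : ∀ a : F, w a = 0 ↔ a = 0)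
    (hwneg : ∀ a : F, w (-a) = w a)
    (hwadd : ∀ a b : F, w (a + b) ≤ w a + w b)
    {T : (∀ i, Fin (k i) → F) ≃ₗ[F] ∀ i, Fin (k i) → F}
    (hT : ∀ u, omegaW w (T u) = omegaW w u) :
    ∃ η : ι ≃ ι, (∀ a b : ι, a ≤ b ↔ η a ≤ η b) ∧ (∀ i, k (η i) = k i) ∧
      (∀ i, ShapeAt w T.toLinearMap i (η i)) ∧
      (∀ i, ShapeAt w T.symm.toLinearMap i (η.symm i)) := by
  have hT' := iso_symm hT
  choose f hfl hfall using fun i => exists_block hk hw0 hwneg hwadd hT i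
  choose g hgl hgall using fun i => exists_block hk hw0 hwneg hwadd hT' i
  have hfs : ∀ i, ShapeAt w T.toLinearMap i (f i) :=
    fun i => shape_of_block hw0 hwadd hT i (hfl i) (hfall i)
  have hgs : ∀ i, ShapeAt w T.symm.toLinearMap i (g i) :=
    fun i => shape_of_block hw0 hwadd hT' i (hgl i) (hgall i)
  have hfs' : ∀ i, ShapeAt w T.symm.symm.toLinearMap i (f i) := by
    intro i
    rw [LinearEquiv.symm_symm]
    exact hfs i
  have hleft : ∀ i, g (f i) = i := shape_inverse hk hw0 hT hfl hgl hfs hgs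
  have hright : ∀ i, f (g i) = i := shape_inverse hk hw0 hT' hgl hfl hgs hfs'
  set η : ι ≃ ι := ⟨f, g, hleft, hright⟩ with hη
  have hsymm : ∀ i, η.symm i = g i := fun i => rfl
  have happ : ∀ i, η i = f i := fun i => rfl
  refine ⟨η, ?_, ?_, hfs, fun i => hgs i⟩
  · intro a b
    constructor
    · intro hab
      rcases eq_or_lt_of_le hab with h | h
      · exact le_of_eq (congrArg f h)
      · exact (shape_mono hk hw0 hT hfl hfs h).le
    · intro hab
      rcases eq_or_lt_of_le hab with h | h
      · have h1 := congrArg g h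
        rw [happ a, happ b, hleft, hleft] at h1
        exact le_of_eq h1
      · have h2 := shape_mono hk hw0 hT' hgl hgs h
        rw [happ a, happ b, hleft, hleft] at h2
        exact h2.le
  · intro i
    refine le_antisymm ?_ (shape_k_le hw0 (hfs i))
    have h1 := shape_k_le hw0 (hgs (f i))
    rwa [hleft] at h1

end Dev11
section Dev12
set_option linter.unusedSectionVars false
set_option linter.unusedVariables false
variable [Fintype ι] [PartialOrder ι] [Field F] [Fintype F] {k : ι → ℕ}
variable {w : F → ℕ}

lemma pi_block_congr (u : ∀ i, Fin (k i) → F) {i i' : ι} (h : i' = i) (j : Fin (k i')) :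
    u i' j = u i (Fin.cast (congrArg k h) j) := by subst h; rfl

/-- the map T_φ induced by an automorphism -/
def Pmap (φ : ι ≃ ι) (h1 : ∀ i : ι, k i = k (φ.symm i)) (h2 : ∀ i : ι, k i = k (φ i)) :
    (∀ i, Fin (k i) → F) ≃ₗ[F] ∀ i, Fin (k i) → F where
  toFun u := fun i j => u (φ.symm i) (Fin.cast (h1 i) j)
  invFun u := fun i j => u (φ i) (Fin.cast (h2 i) j)
  map_add' u v := rfl
  map_smul' c u := rfl
  left_inv u := by
    funext i j
    show u (φ.symm (φ i)) (Fin.cast (h1 (φ i)) (Fin.cast (h2 i) j)) = u i j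
    rw [pi_block_congr u (φ.symm_apply_apply i)]
    exact congrArg (u i) (Fin.ext rfl)
  right_inv u := by
    funext i j
    show u (φ (φ.symm i)) (Fin.cast (h2 (φ.symm i)) (Fin.cast (h1 i) j)) = u i j
    rw [pi_block_congr u (φ.apply_symm_apply i)]
    exact congrArg (u i) (Fin.ext rfl)

variable {φ : ι ≃ ι} {h1 : ∀ i : ι, k i = k (φ.symm i)} {h2 : ∀ i : ι, k i = k (φ i)}

lemma Pmap_apply (u : ∀ i, Fin (k i) → F) (i : ι) (j : Fin (k i)) :
    Pmap φ h1 h2 u i j = u (φ.symm i) (Fin.cast (h1 i) j) := rfl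

lemma Pmap_symm_apply (u : ∀ i, Fin (k i) → F) (i : ι) (j : Fin (k i)) :
    (Pmap φ h1 h2).symm u i j = u (φ i) (Fin.cast (h2 i) j) := rfl

lemma Pmap_block_zero_iff {u : ∀ i, Fin (k i) → F} {i : ι} :
    Pmap φ h1 h2 u i = 0 ↔ u (φ.symm i) = 0 := by
  constructor
  · intro h
    funext j'
    have h3 := congrFun h (Fin.cast (h1 i).symm j')
    rw [Pmap_apply] at h3
    have harg : (Fin.cast (h1 i) (Fin.cast (h1 i).symm j')) = j' := Fin.ext rfl
    rwa [harg] at h3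
  · intro h
    funext j
    rw [Pmap_apply, h]
    rfl

lemma mem_suppB_Pmap {u : ∀ i, Fin (k i) → F} {i : ι} :
    i ∈ suppB (Pmap φ h1 h2 u) ↔ φ.symm i ∈ suppB u := by
  rw [mem_suppB, mem_suppB, not_iff_not]
  exact Pmap_block_zero_iff

lemma Wblk_Pmap (u : ∀ i, Fin (k i) → F) (i : ι) :
    Wblk w (Pmap φ h1 h2 u) i = Wblk w u (φ.symm i) := by
  apply le_antisymm
  · exact Finset.sup_le fun j _ => le_Wblk u (φ.symm i) (Fin.cast (h1 i) j)
  · refine Finset.sup_le fun j' _ => ?_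
    have h := le_Wblk (w := w) (Pmap φ h1 h2 u) i (Fin.cast (h1 i).symm j')
    have harg : Pmap φ h1 h2 u i (Fin.cast (h1 i).symm j') = u (φ.symm i) j' :=
      congrArg (u (φ.symm i)) (Fin.ext rfl)
    rwa [harg] at h

variable (hmono : ∀ a b : ι, a ≤ b ↔ φ a ≤ φ b)

lemma hmono_symm (hmono : ∀ a b : ι, a ≤ b ↔ φ a ≤ φ b) :
    ∀ a b : ι, φ.symm a ≤ φ.symm b ↔ a ≤ b := by
  intro a b
  rw [hmono (φ.symm a) (φ.symm b), φ.apply_symm_apply, φ.apply_symm_apply]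

lemma mem_idealOf_Pmap (hmono : ∀ a b : ι, a ≤ b ↔ φ a ≤ φ b)
    {u : ∀ i, Fin (k i) → F} {i : ι} :
    i ∈ idealOf (Pmap φ h1 h2 u) ↔ φ.symm i ∈ idealOf u := by
  rw [mem_idealOf, mem_idealOf]
  constructor
  · rintro ⟨j, hj, hij⟩
    exact ⟨φ.symm j, mem_suppB_Pmap.1 hj, (hmono_symm hmono i j).2 hij⟩
  · rintro ⟨j', hj', hij'⟩
    refine ⟨φ j', ?_, ?_⟩
    · rw [mem_suppB_Pmap, φ.symm_apply_apply]
      exact hj'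
    · have := (hmono (φ.symm i) j').1 hij'
      rwa [φ.apply_symm_apply] at this

lemma mem_maxOf_Pmap (hmono : ∀ a b : ι, a ≤ b ↔ φ a ≤ φ b)
    {u : ∀ i, Fin (k i) → F} {m : ι} :
    m ∈ maxOf (Pmap φ h1 h2 u) ↔ φ.symm m ∈ maxOf u := by
  rw [mem_maxOf, mem_maxOf]
  constructor
  · rintro ⟨hm, hmax⟩
    refine ⟨mem_idealOf_Pmap hmono |>.1 hm, ?_⟩
    intro j hj hle
    have h3 : m ≤ φ j := by
      have := (hmono (φ.symm m) j).1 hle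
      rwa [φ.apply_symm_apply] at this
    have h4 : φ j ∈ idealOf (Pmap φ h1 h2 u) := by
      rw [mem_idealOf_Pmap hmono, φ.symm_apply_apply]
      exact hj
    have := hmax (φ j) h4 h3
    rw [this, φ.symm_apply_apply]
  · rintro ⟨hm, hmax⟩
    refine ⟨mem_idealOf_Pmap hmono |>.2 hm, ?_⟩
    intro j hj hle
    have h3 : φ.symm m ≤ φ.symm j := (hmono_symm hmono m j).2 hle
    have h4 : φ.symm j ∈ idealOf u := (mem_idealOf_Pmap hmono).1 hj
    have h5 := hmax (φ.symm j) h4 h3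
    have := congrArg φ h5
    rwa [φ.apply_symm_apply, φ.apply_symm_apply] at this

lemma maxOf_subset_idealOf (u : ∀ i, Fin (k i) → F) : maxOf u ⊆ idealOf u :=
  Finset.filter_subset _ _

lemma idealOf_Pmap_eq (hmono : ∀ a b : ι, a ≤ b ↔ φ a ≤ φ b)
    (u : ∀ i, Fin (k i) → F) :
    idealOf (Pmap φ h1 h2 u) = (idealOf u).map φ.toEmbedding := by
  ext i
  rw [mem_idealOf_Pmap hmono, Finset.mem_map_equiv]

lemma maxOf_Pmap_eq (hmono : ∀ a b : ι, a ≤ b ↔ φ a ≤ φ b)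
    (u : ∀ i, Fin (k i) → F) :
    maxOf (Pmap φ h1 h2 u) = (maxOf u).map φ.toEmbedding := by
  ext i
  rw [mem_maxOf_Pmap hmono, Finset.mem_map_equiv]

/-- T_φ is an isometry -/
lemma Pmap_iso (hmono : ∀ a b : ι, a ≤ b ↔ φ a ≤ φ b) (u : ∀ i, Fin (k i) → F) :
    omegaW w (Pmap φ h1 h2 u) = omegaW w u := by
  unfold omegaW
  congr 1
  · rw [maxOf_Pmap_eq hmono, Finset.sum_map]
    refine Finset.sum_congr rfl fun m hm => ?_
    rw [show φ.toEmbedding m = φ m from rfl, Wblk_Pmap, φ.symm_apply_apply]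
  · congr 1
    rw [Finset.card_sdiff_of_subset (maxOf_subset_idealOf _),
      Finset.card_sdiff_of_subset (maxOf_subset_idealOf _), idealOf_Pmap_eq hmono,
      maxOf_Pmap_eq hmono, Finset.card_map, Finset.card_map]

end Dev12
section Dev13
set_option linter.unusedSectionVars false
set_option linter.unusedVariables false
variable [Fintype ι] [PartialOrder ι] [Field F] [Fintype F] {k : ι → ℕ}
variable {w : F → ℕ}

lemma Wblk_Pmap_symm {φ : ι ≃ ι} {h1 : ∀ i : ι, k i = k (φ.symm i)}
    {h2 : ∀ i : ι, k i = k (φ i)} (v : ∀ i, Fin (k i) → F) (l : ι) :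
    Wblk w ((Pmap φ h1 h2).symm v) l = Wblk w v (φ l) := by
  apply le_antisymm
  · exact Finset.sup_le fun j _ => le_Wblk v (φ l) (Fin.cast (h2 l) j)
  · refine Finset.sup_le fun j' _ => ?_
    have h := le_Wblk (w := w) ((Pmap φ h1 h2).symm v) l (Fin.cast (h2 l).symm j')
    have harg : (Pmap φ h1 h2).symm v l (Fin.cast (h2 l).symm j') = v (φ l) j' :=
      congrArg (v (φ l)) (Fin.ext rfl)
    rwa [harg] at h

lemma shape_lower {T : (∀ i, Fin (k i) → F) →ₗ[F] ∀ i, Fin (k i) → F} {f : ι → ι}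
    (hf : ∀ i, ShapeAt w T i (f i)) (v : ∀ i, Fin (k i) → F) {l : ι}
    (hl : l ∈ suppB (T v)) : ∃ m ∈ suppB v, l ≤ f m := by
  have hTv : T v = ∑ i ∈ Finset.univ, T (sing i (v i)) := by
    conv_lhs => rw [eq_sum_sing v]
    rw [map_sum]
  rw [hTv] at hl
  obtain ⟨m, -, hm⟩ := suppB_sum_subset hl
  by_cases hvm : v m = 0
  · rw [hvm, sing_zero, map_zero] at hm
    exact absurd rfl (mem_suppB.1 hm)
  obtain ⟨u, γ, hdec, hus, hγ, hW⟩ := hf m (sing m (v m)) (suppB_sing _ _)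
  rw [hdec] at hm
  refine ⟨m, mem_suppB.2 hvm, ?_⟩
  rcases Finset.mem_union.1 (suppB_add_subset u γ hm) with h | h
  · exact le_of_eq (Finset.mem_singleton.1 (hus h))
  · exact (hγ l h).le

lemma shape_congr {S T : (∀ i, Fin (k i) → F) →ₗ[F] ∀ i, Fin (k i) → F}
    (h : ∀ v, S v = T v) {i j : ι} (hs : ShapeAt w S i j) : ShapeAt w T i j := by
  intro v hv
  obtain ⟨u, γ, hdec, hrest⟩ := hs v hv
  exact ⟨u, γ, by rw [← h]; exact hdec, hrest⟩

lemma shape_comp {S T : (∀ i, Fin (k i) → F) →ₗ[F] ∀ i, Fin (k i) → F}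
    {fS fT : ι → ι}
    (hS : ∀ i, ShapeAt w S i (fS i)) (hT : ∀ i, ShapeAt w T i (fT i))
    (hmonoS : ∀ a b : ι, a < b → fS a < fS b) (i : ι) :
    ShapeAt w (S ∘ₗ T) i (fS (fT i)) := by
  intro v hv
  obtain ⟨u, γ, hdec, hus, hγ, hW⟩ := hT i v hv
  obtain ⟨u', γ', hdec', hus', hγ', hW'⟩ := hS (fT i) u hus
  refine ⟨u', γ' + S γ, ?_, hus', ?_, hW.trans hW'⟩
  · have : (S ∘ₗ T) v = S (T v) := rfl
    rw [this, hdec, map_add, hdec']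
    abel
  · intro l hl
    rcases Finset.mem_union.1 (suppB_add_subset γ' (S γ) hl) with h | h
    · exact hγ' l h
    · obtain ⟨m, hm, hlm⟩ := shape_lower hS γ h
      exact lt_of_le_of_lt hlm (hmonoS _ _ (hγ m hm))

lemma shape_unique (hk : ∀ i, 0 < k i) (hw0 : ∀ a : F, w a = 0 ↔ a = 0)
    {T : (∀ i, Fin (k i) → F) →ₗ[F] ∀ i, Fin (k i) → F} {i j j' : ι}
    (hj : ShapeAt w T i j) (hj' : ShapeAt w T i j') : j = j' := by
  by_contra hne
  set v : ∀ i, Fin (k i) → F := sing i (fun _ => 1) with hv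
  obtain ⟨u, γ, hdec, hus, hγ, hW⟩ := hj v (suppB_sing _ _)
  obtain ⟨u', γ', hdec', hus', hγ', hW'⟩ := hj' v (suppB_sing _ _)
  have hWv : Wblk w v i ≠ 0 := by
    intro h
    have h2 := (Wblk_eq_zero_iff hw0).1 h
    rw [hv, sing_apply_same] at h2
    have := congrFun h2 ⟨0, hk i⟩
    simp at this
  have huj : u j ≠ 0 := by
    intro h
    exact hWv (hW.trans (Wblk_apply_zero hw0 h))
  have huj' : u' j' ≠ 0 := by
    intro h
    exact hWv (hW'.trans (Wblk_apply_zero hw0 h))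
  have hγj : γ j = 0 := by
    by_contra hc
    exact absurd (hγ j (mem_suppB.2 hc)) (lt_irrefl j)
  have hγ'j' : γ' j' = 0 := by
    by_contra hc
    exact absurd (hγ' j' (mem_suppB.2 hc)) (lt_irrefl j')
  have hu'j : u' j = 0 := by
    by_contra hc
    exact hne ((Finset.mem_singleton.1 (hus' (mem_suppB.2 hc))).symm ▸ rfl)
  have huj'0 : u j' = 0 := by
    by_contra hc
    exact hne (Finset.mem_singleton.1 (hus (mem_suppB.2 hc))).symm
  have heq := hdec.symm.trans hdec'
  have h1 := congrFun heq j
  have h2 := congrFun heq j'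
  rw [Pi.add_apply, Pi.add_apply, hγj, add_zero, hu'j, zero_add] at h1
  rw [Pi.add_apply, Pi.add_apply, hγ'j', add_zero, huj'0, zero_add] at h2
  have hjlt : j < j' := by
    have : γ' j ≠ 0 := by rw [← h1]; exact huj
    exact hγ' j (mem_suppB.2 this)
  have hjlt' : j' < j := by
    have : γ j' ≠ 0 := by rw [h2]; exact huj'
    exact hγ j' (mem_suppB.2 this)
  exact absurd (hjlt.trans hjlt') (lt_irrefl j)

lemma strict_mono_of_iff {η : ι ≃ ι} (hmono : ∀ a b : ι, a ≤ b ↔ η a ≤ η b) :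
    ∀ a b : ι, a < b → η a < η b := by
  intro a b hab
  refine lt_of_le_of_ne ((hmono a b).1 hab.le) ?_
  intro h
  exact absurd (η.injective h) (ne_of_lt hab)

end Dev13
section Dev14
set_option linter.unusedSectionVars false
set_option linter.unusedVariables false
variable [Fintype ι] [PartialOrder ι] [Field F] [Fintype F] {k : ι → ℕ}

/-- the subgroup 𝒯 -/
def TsubG (hk : ∀ i, 0 < k i) (w : F → ℕ)
    (hw0 : ∀ a : F, w a = 0 ↔ a = 0)
    (hwneg : ∀ a : F, w (-a) = w a)
    (hwadd : ∀ a b : F, w (a + b) ≤ w a + w b) : Subgroup (glIso (k := k) w) where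
  carrier := {T | InT w T.val.toLinearMap}
  one_mem' := fun i v hv =>
    ⟨v, 0, (add_zero v).symm, hv, fun l hl => absurd rfl (mem_suppB.1 hl), rfl⟩
  mul_mem' := by
    intro a b ha hb
    intro i
    have h := shape_comp (w := w) (fS := fun i => i) (fT := fun i => i)
      (fun i => ha i) (fun i => hb i) (fun x y h => h) i
    exact shape_congr (fun v => rfl) h
  inv_mem' := by
    intro a ha
    obtain ⟨η, hmono, hφk, hsh, hsh'⟩ := main_shape hk hw0 hwneg hwadd (T := a.val) a.2
    have hid : ∀ i, η i = i := fun i => shape_unique hk hw0 (hsh i) (ha i)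
    have hid' : ∀ i, η.symm i = i := by
      intro i
      conv_lhs => rw [← hid i]
      exact η.symm_apply_apply i
    intro i
    have h := hsh' i
    rw [hid' i] at h
    exact shape_congr (fun v => rfl) h

/-- the subgroup 𝒜 -/
def AsubG (w : F → ℕ) : Subgroup (glIso (k := k) w) where
  carrier := {T | ∃ (φ : ι ≃ ι) (_ : ∀ a b : ι, a ≤ b ↔ φ a ≤ φ b)
      (hφk : ∀ i, k (φ i) = k i),
      ∀ (u : ∀ i, Fin (k i) → F) (i : ι) (j : Fin (k i)),
        T.val u i j = u (φ.symm i) (Fin.cast (by simpa using hφk (φ.symm i)) j)}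
  one_mem' := ⟨Equiv.refl ι, fun a b => Iff.rfl, fun i => rfl, fun u i j => rfl⟩
  mul_mem' := by
    rintro a b ⟨φa, hma, hka, hfa⟩ ⟨φb, hmb, hkb, hfb⟩
    refine ⟨φb.trans φa, ?_, ?_, ?_⟩
    · intro x y
      rw [hmb x y, hma (φb x) (φb y)]
      exact Iff.rfl
    · intro i
      exact (hka (φb i)).trans (hkb i)
    · intro u i j
      have h1 : (a * b).val u i j = (a.val) ((b.val) u) i j := rfl
      rw [h1, hfa ((b.val) u) i j, hfb u (φa.symm i) _]
      rfl
  inv_mem' := by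
    rintro a ⟨φ, hm, hk', hf⟩
    have hcast : ∀ i : ι, k i = k (φ.symm i) := by
      intro i
      have h := hk' (φ.symm i)
      rwa [φ.apply_symm_apply] at h
    refine ⟨φ.symm, fun x y => (hmono_symm hm x y).symm, fun i => (hcast i).symm, ?_⟩
    intro u i j
    set u' : ∀ i, Fin (k i) → F := fun i j => u (φ i) (Fin.cast (hk' i).symm j) with hu'
    have hau' : a.val u' = u := by
      funext i' j'
      rw [hf u' i' j', hu']
      change u (φ (φ.symm i')) _ = u i' j'
      rw [pi_block_congr u (φ.apply_symm_apply i')]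
      exact congrArg (u i') (Fin.ext rfl)
    have hsymm : (a⁻¹).val u = u' := by
      have h2 : (a⁻¹).val u = a.val.symm u := rfl
      rw [h2, ← hau', a.val.symm_apply_apply]
    rw [hsymm]
    rfl

end Dev14
/-- The group of linear isometries is the (internal) semidirect product of the
normal subgroup `𝒯` and a subgroup `𝒜` isomorphic to `Aut(P,π)`
(the image of `Ψ : φ ↦ T_φ`). -/
theorem stmt14 [Fintype ι] [PartialOrder ι] [Field F] [Fintype F] {k : ι → ℕ}
    (hk : ∀ i, 0 < k i)
    (w : F → ℕ)
    (hw0 : ∀ a : F, w a = 0 ↔ a = 0)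
    (hwneg : ∀ a : F, w (-a) = w a)
    (hwadd : ∀ a b : F, w (a + b) ≤ w a + w b) :
    ∃ Tsub Asub : Subgroup (glIso (k := k) w),
      Tsub.Normal ∧ Tsub ⊓ Asub = ⊥ ∧ Tsub ⊔ Asub = ⊤ ∧
      (∀ T : glIso (k := k) w, T ∈ Tsub ↔ InT w T.val.toLinearMap) ∧
      (∀ T : glIso (k := k) w, T ∈ Asub ↔
        ∃ (φ : ι ≃ ι) (_ : ∀ a b : ι, a ≤ b ↔ φ a ≤ φ b)
          (hφk : ∀ i, k (φ i) = k i),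
          ∀ (u : ∀ i, Fin (k i) → F) (i : ι) (j : Fin (k i)),
            T.val u i j = u (φ.symm i) (Fin.cast (by simpa using hφk (φ.symm i)) j)) := by
  refine ⟨TsubG hk w hw0 hwneg hwadd, AsubG w, ?_, ?_, ?_, fun T => Iff.rfl,
    fun T => Iff.rfl⟩
  · -- normality
    constructor
    intro n hn g
    obtain ⟨η, hmono, hφk, hsh, hsh'⟩ := main_shape hk hw0 hwneg hwadd (T := g.val) g.2
    intro i
    have hinner : ∀ i, ShapeAt w
        (n.val.toLinearMap ∘ₗ g.val.symm.toLinearMap) i (η.symm i) := by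
      intro i
      exact shape_comp (w := w) (fS := fun i => i) (fT := fun i => η.symm i)
        (fun i => hn i) (fun i => hsh' i) (fun x y h => h) i
    have houter := shape_comp (w := w) (fS := fun i => η i) (fT := fun i => η.symm i)
      (fun i => hsh i) hinner (fun x y h => strict_mono_of_iff hmono x y h) i
    rw [η.apply_symm_apply] at houter
    exact shape_congr (fun v => rfl) houter
  · -- trivial intersection
    rw [eq_bot_iff]
    rintro T ⟨hT1, hT2⟩
    obtain ⟨φ, hm, hk', hf⟩ := hT2
    have hfix : ∀ i, φ.symm i = i := by
      intro i
      by_contra hne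
      set v : ∀ i, Fin (k i) → F := sing i (fun _ => (1:F)) with hv
      obtain ⟨u, γ, hdec, hus, hγ, hW⟩ := hT1 i v (suppB_sing _ _)
      have hWv : Wblk w v i ≠ 0 := by
        intro h
        have h2 := (Wblk_eq_zero_iff hw0).1 h
        rw [hv, sing_apply_same] at h2
        have := congrFun h2 ⟨0, hk i⟩
        simp at this
      have hui : u i ≠ 0 := fun h => hWv (hW.trans (Wblk_apply_zero hw0 h))
      have hγi : γ i = 0 := by
        by_contra hc
        exact absurd (hγ i (mem_suppB.2 hc)) (lt_irrefl i)
      have hTvi : T.val v i ≠ 0 := by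
        have h1 : T.val v i = (u + γ) i := congrFun hdec i
        rw [h1, Pi.add_apply, hγi, add_zero]
        exact hui
      refine hTvi ?_
      funext j
      rw [hf v i j]
      have h3 : v (φ.symm i) = 0 := by rw [hv]; exact sing_apply_ne hne _
      rw [h3]
      rfl
    have hT1' : T = 1 := by
      apply Subtype.ext
      apply LinearEquiv.toLinearMap_injective
      apply LinearMap.ext
      intro u
      funext i j
      show T.val u i j = u i j
      rw [hf u i j, pi_block_congr u (hfix i)]
      exact congrArg (u i) (Fin.ext rfl)
    rw [hT1']
    exact Subgroup.one_mem ⊥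
  · -- generation
    rw [eq_top_iff]
    intro T _
    obtain ⟨η, hmono, hφk, hsh, hsh'⟩ := main_shape hk hw0 hwneg hwadd (T := T.val) T.2
    have h1 : ∀ i : ι, k i = k (η.symm i) := by
      intro i
      have h := hφk (η.symm i)
      rwa [η.apply_symm_apply] at h
    have h2 : ∀ i : ι, k i = k (η i) := fun i => (hφk i).symm
    set P : glIso (k := k) w := ⟨Pmap η h1 h2, fun u => Pmap_iso hmono u⟩ with hP
    have hPA : P ∈ AsubG w := ⟨η, hmono, hφk, fun u i j => rfl⟩
    have htT : T * P⁻¹ ∈ TsubG hk w hw0 hwneg hwadd := by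
      intro i v hv
      have hsupp : suppB ((Pmap η h1 h2).symm v) ⊆ {η.symm i} := by
        intro l hl
        rw [mem_suppB] at hl
        have hvl : v (η l) ≠ 0 := by
          intro h0
          apply hl
          funext j
          rw [Pmap_symm_apply, h0]
          rfl
        have h4 : η l = i := Finset.mem_singleton.1 (hv (mem_suppB.2 hvl))
        rw [Finset.mem_singleton, ← h4, η.symm_apply_apply]
      obtain ⟨u, γ, hdec, hus, hγ, hW⟩ := hsh (η.symm i) ((Pmap η h1 h2).symm v) hsupp
      refine ⟨u, γ, hdec, ?_, ?_, ?_⟩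
      · rwa [η.apply_symm_apply] at hus
      · intro l hl
        have := hγ l hl
        rwa [η.apply_symm_apply] at this
      · have hWv : Wblk w ((Pmap η h1 h2).symm v) (η.symm i)
            = Wblk w v (η (η.symm i)) := Wblk_Pmap_symm _ _
        rw [η.apply_symm_apply] at hWv
        rw [← hWv, hW, η.apply_symm_apply]
    have hTeq : T = (T * P⁻¹) * P := by rw [inv_mul_cancel_right]
    rw [hTeq]
    exact Subgroup.mul_mem _ (Subgroup.mem_sup_left htT) (Subgroup.mem_sup_right hPA)
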